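/- arXiv:1306.4599 — 7 statements merged into one kernel-verified Lean document; each statement's English description precedes it below -/
import Mathlib

section
/- Let A be a ring, B an A-algebra, A' an A-algebra with a surjective ring homomorphism A' → A having nilpotent kernel. If the structure map A → B is integral (equivalently, if B is integral over A), then the fiber product ring B' = B ×_A A' is integral over A; in particular the inclusion B' ⊆ B × A' is an integral ring extension. -/
/-!
Statement 0: Let `A` be a ring, `B` an `A`-algebra mapping to `A`, and `A'` an `A`-algebra
with a surjective map `A' → A` having nilpotent kernel.  If `B` is integral over `A`, then
the fiber product ring `B' = B ×_A A'` (pairs with equal images in `A`) is integral over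
`A`; in particular the inclusion `B' ⊆ B × A'` is an integral ring extension.
-/

lemma nilpotent_isIntegral {A C : Type} [CommRing A] [CommRing C] [Algebra A C]
    {x : C} (hx : IsNilpotent x) : IsIntegral A x := by
  obtain ⟨n, hn⟩ := hx
  refine ⟨Polynomial.X ^ (n + 1), Polynomial.monic_X_pow _, ?_⟩
  simp [pow_succ, hn]

theorem statement_0 {A B A' : Type} [CommRing A] [CommRing B] [CommRing A']
    [Algebra A B] [Algebra A A']
    (g : B →ₐ[A] A) (f : A' →ₐ[A] A)
    (hf : Function.Surjective f)
    (hker : IsNilpotent (RingHom.ker (f : A' →+* A)))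
    (hint : Algebra.IsIntegral A B) :
    Algebra.IsIntegral A
      (AlgHom.equalizer (g.comp (AlgHom.fst A B A')) (f.comp (AlgHom.snd A B A'))) ∧
    Algebra.IsIntegral
      (AlgHom.equalizer (g.comp (AlgHom.fst A B A')) (f.comp (AlgHom.snd A B A')))
      (B × A') := by
  -- every element of A' is integral over A
  obtain ⟨n, hn⟩ := hker
  have hA' : ∀ a' : A', IsIntegral A a' := by
    intro a'
    have hmem : a' - algebraMap A A' (f a') ∈ RingHom.ker (f : A' →+* A) := by
      simp [RingHom.mem_ker, map_sub]
    have hnil : IsNilpotent (a' - algebraMap A A' (f a')) := by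
      refine ⟨n, ?_⟩
      have : (a' - algebraMap A A' (f a')) ^ n ∈ (RingHom.ker (f : A' →+* A)) ^ n :=
        Ideal.pow_mem_pow hmem n
      rw [hn] at this
      simpa using this
    have : a' = (a' - algebraMap A A' (f a')) + algebraMap A A' (f a') := by ring
    rw [this]
    exact (nilpotent_isIntegral hnil).add (isIntegral_algebraMap)
  -- B × A' is integral over A
  have hprod : Algebra.IsIntegral A (B × A') := by
    constructor
    intro ⟨b, a'⟩
    obtain ⟨p, hpm, hp⟩ := hint.isIntegral b
    obtain ⟨q, hqm, hq⟩ := hA' a'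
    refine ⟨p * q, hpm.mul hqm, ?_⟩
    have h1 : (AlgHom.fst A B A') ((Polynomial.aeval ((b, a') : B × A')) (p * q)) = 0 := by
      rw [← Polynomial.aeval_algHom_apply (AlgHom.fst A B A'), map_mul]
      have : (AlgHom.fst A B A') ((b, a') : B × A') = b := rfl
      rw [this, show Polynomial.aeval b p = 0 from hp, zero_mul]
    have h2 : (AlgHom.snd A B A') ((Polynomial.aeval ((b, a') : B × A')) (p * q)) = 0 := by
      rw [← Polynomial.aeval_algHom_apply (AlgHom.snd A B A'), map_mul]
      have : (AlgHom.snd A B A') ((b, a') : B × A') = a' := rfl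
      rw [this, show Polynomial.aeval a' q = 0 from hq, mul_zero]
    exact Prod.ext h1 h2
  -- conclude
  set S := AlgHom.equalizer (g.comp (AlgHom.fst A B A')) (f.comp (AlgHom.snd A B A'))
  have hS : Algebra.IsIntegral A S := by
    constructor
    intro x
    exact (isIntegral_algHom_iff S.val Subtype.val_injective).mp (hprod.isIntegral (S.val x))
  refine ⟨hS, ?_⟩
  constructor
  intro x
  exact (hprod.isIntegral x).tower_top
end

section
/- Let A be a ring, and let A → B and B → C be integral ring homomorphisms. Then the homomorphism B → C can be written as a filtered colimit of homomorphisms B_λ → C_λ of A-algebras where each B_λ and C_λ is a finite A-algebra of finite presentation (as an A-algebra), with colimit B → C. -/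
/-!
Statement 2: Let `A` be a ring and let `A → B` and `B → C` be integral ring
homomorphisms.  Then `B → C` can be written as a filtered colimit (over a directed
index set) of homomorphisms `B_λ → C_λ` of `A`-algebras, where each `B_λ` and `C_λ`
is a finite (module-finite) `A`-algebra of finite presentation.
-/

/-- A presentation of an `A`-algebra homomorphism `g : B → C` as a filtered (directed)
colimit of homomorphisms `B_λ → C_λ` of finite and finitely presented `A`-algebras.
The colimit condition is expressed by compatible maps to `B` and `C` which are jointly
surjective and eventually injective. -/
structure IntegralApproxSystem (A B C : Type) [CommRing A] [CommRing B] [CommRing C]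
    [Algebra A B] [Algebra A C] (g : B →ₐ[A] C) where
  ι : Type
  [pre : Preorder ι]
  directed : IsDirected ι (· ≤ ·)
  ne : Nonempty ι
  Bo : ι → Type
  Co : ι → Type
  [ringB : ∀ i, CommRing (Bo i)]
  [ringC : ∀ i, CommRing (Co i)]
  [algB : ∀ i, Algebra A (Bo i)]
  [algC : ∀ i, Algebra A (Co i)]
  finB : ∀ i, Module.Finite A (Bo i)
  fpB : ∀ i, Algebra.FinitePresentation A (Bo i)
  finC : ∀ i, Module.Finite A (Co i)
  fpC : ∀ i, Algebra.FinitePresentation A (Co i)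
  gl : ∀ i, Bo i →ₐ[A] Co i
  tB : ∀ i j, i ≤ j → (Bo i →ₐ[A] Bo j)
  tC : ∀ i j, i ≤ j → (Co i →ₐ[A] Co j)
  tB_id : ∀ i, tB i i le_rfl = AlgHom.id A (Bo i)
  tC_id : ∀ i, tC i i le_rfl = AlgHom.id A (Co i)
  tB_comp : ∀ i j k (hij : i ≤ j) (hjk : j ≤ k),
    (tB j k hjk).comp (tB i j hij) = tB i k (hij.trans hjk)
  tC_comp : ∀ i j k (hij : i ≤ j) (hjk : j ≤ k),
    (tC j k hjk).comp (tC i j hij) = tC i k (hij.trans hjk)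
  square : ∀ i j (hij : i ≤ j), (gl j).comp (tB i j hij) = (tC i j hij).comp (gl i)
  toB : ∀ i, Bo i →ₐ[A] B
  toC : ∀ i, Co i →ₐ[A] C
  toB_comp : ∀ i j (hij : i ≤ j), (toB j).comp (tB i j hij) = toB i
  toC_comp : ∀ i j (hij : i ≤ j), (toC j).comp (tC i j hij) = toC i
  compat : ∀ i, g.comp (toB i) = (toC i).comp (gl i)
  jointly_surjB : ∀ b : B, ∃ i, b ∈ (toB i).range
  jointly_surjC : ∀ c : C, ∃ i, c ∈ (toC i).range
  eventually_eqB : ∀ i (x y : Bo i), toB i x = toB i y →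
    ∃ j, ∃ hij : i ≤ j, tB i j hij x = tB i j hij y
  eventually_eqC : ∀ i (x y : Co i), toC i x = toC i y →
    ∃ j, ∃ hij : i ≤ j, tC i j hij x = tC i j hij y
namespace IASAux

open MvPolynomial

variable {A B C : Type} [CommRing A] [CommRing B] [CommRing C]
    [Algebra A B] [Algebra A C]

/-- The index type: finite sets of generators of `B` and `C`, finite sets of relations,
and substitution data expressing the image under `g` of each `B`-generator. -/
structure Idx (A B C : Type) [CommRing A] [CommRing B] [CommRing C]
    [Algebra A B] [Algebra A C] (g : B →ₐ[A] C) where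
  s : Set B
  hs : s.Finite
  t : Set C
  ht : t.Finite
  SB : Set (MvPolynomial ↥s A)
  hSBfin : SB.Finite
  SC : Set (MvPolynomial ↥t A)
  hSCfin : SC.Finite
  r : ↥s → MvPolynomial ↥t A
  hSB : ∀ p ∈ SB, aeval (fun x : ↥s => (x : B)) p = 0
  hSC : ∀ q ∈ SC, aeval (fun y : ↥t => (y : C)) q = 0
  hmonB : ∀ x : ↥s, ∃ p : Polynomial A, p.Monic ∧
    Polynomial.aeval (X x : MvPolynomial ↥s A) p ∈ Ideal.span SB
  hmonC : ∀ y : ↥t, ∃ p : Polynomial A, p.Monic ∧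
    Polynomial.aeval (X y : MvPolynomial ↥t A) p ∈ Ideal.span SC
  hr : ∀ x : ↥s, aeval (fun y : ↥t => (y : C)) (r x) = g (x : B)
  hglwd : ∀ p ∈ SB, aeval r p ∈ Ideal.span SC

lemma span_apply_mem {R R' : Type} [CommRing R] [CommRing R'] [Algebra A R] [Algebra A R']
    (f : R →ₐ[A] R') {S : Set R} {J : Ideal R'} (h : ∀ p ∈ S, f p ∈ J) :
    ∀ p ∈ Ideal.span S, f p ∈ J := by
  intro p hp
  have h2 : Ideal.span S ≤ J.comap (f : R →+* R') := Ideal.span_le.2 (fun q hq => h q hq)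
  exact h2 hp

lemma span_apply_zero {R R' : Type} [CommRing R] [CommRing R'] [Algebra A R] [Algebra A R']
    (f : R →ₐ[A] R') {S : Set R} (h : ∀ p ∈ S, f p = 0) :
    ∀ p ∈ Ideal.span S, f p = 0 := by
  intro p hp
  have := span_apply_mem f (J := (⊥ : Ideal R'))
    (fun q hq => by rw [Ideal.mem_bot]; exact h q hq) p hp
  rwa [Ideal.mem_bot] at this

lemma aeval_sub_mem {σ τ : Type} {J : Ideal (MvPolynomial τ A)} {f f' : σ → MvPolynomial τ A}
    (h : ∀ x, f x - f' x ∈ J) (p : MvPolynomial σ A) :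
    aeval f p - aeval f' p ∈ J := by
  rw [← Ideal.Quotient.eq]
  have h1 := comp_aeval_apply (Ideal.Quotient.mkₐ A J) (f := f) p
  have h2 := comp_aeval_apply (Ideal.Quotient.mkₐ A J) (f := f') p
  simp only [Ideal.Quotient.mkₐ_eq_mk] at h1 h2
  rw [h1, h2]
  have he : (fun x => Ideal.Quotient.mk J (f x)) = fun x => Ideal.Quotient.mk J (f' x) :=
    funext fun x => Ideal.Quotient.eq.2 (h x)
  rw [he]

lemma aeval_r_eval {g : B →ₐ[A] C} {s : Set B} {t : Set C} (r : ↥s → MvPolynomial ↥t A)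
    (hr : ∀ x : ↥s, aeval (fun y : ↥t => (y : C)) (r x) = g (x : B)) (p : MvPolynomial ↥s A) :
    aeval (fun y : ↥t => (y : C)) (aeval r p) = g (aeval (fun x : ↥s => (x : B)) p) := by
  rw [comp_aeval_apply, comp_aeval_apply]
  simp only [hr]

variable (g : B →ₐ[A] C)

instance : Preorder (Idx A B C g) where
  le i j := i.s ⊆ j.s ∧ i.t ⊆ j.t ∧
    (∀ h : i.s ⊆ j.s, ∀ p ∈ i.SB, rename (Set.inclusion h) p ∈ Ideal.span j.SB) ∧
    (∀ h : i.t ⊆ j.t, ∀ q ∈ i.SC, rename (Set.inclusion h) q ∈ Ideal.span j.SC) ∧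
    (∀ (hs : i.s ⊆ j.s) (ht : i.t ⊆ j.t) (x : ↥i.s),
      rename (Set.inclusion ht) (i.r x) - j.r (Set.inclusion hs x) ∈ Ideal.span j.SC)
  le_refl i := by
    refine ⟨subset_rfl, subset_rfl, ?_, ?_, ?_⟩
    · intro h p hp; rw [Set.inclusion_eq_id, rename_id]; exact Ideal.subset_span hp
    · intro h q hq; rw [Set.inclusion_eq_id, rename_id]; exact Ideal.subset_span hq
    · intro hs ht x
      rw [Set.inclusion_eq_id, Set.inclusion_eq_id, rename_id]
      simp
  le_trans i j k hij hjk := by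
    obtain ⟨hs12, ht12, hB12, hC12, hr12⟩ := hij
    obtain ⟨hs23, ht23, hB23, hC23, hr23⟩ := hjk
    refine ⟨hs12.trans hs23, ht12.trans ht23, ?_, ?_, ?_⟩
    · intro h p hp
      have h2 := span_apply_mem (rename (Set.inclusion hs23) : MvPolynomial ↥j.s A →ₐ[A] _)
        (fun q hq => hB23 hs23 q hq) _ (hB12 hs12 p hp)
      rwa [rename_rename] at h2
    · intro h q hq
      have h2 := span_apply_mem (rename (Set.inclusion ht23) : MvPolynomial ↥j.t A →ₐ[A] _)
        (fun d hd => hC23 ht23 d hd) _ (hC12 ht12 q hq)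
      rwa [rename_rename] at h2
    · intro hs ht x
      have t1 : rename (Set.inclusion ht23)
          (rename (Set.inclusion ht12) (i.r x) - j.r (Set.inclusion hs12 x)) ∈ Ideal.span k.SC :=
        span_apply_mem (rename (Set.inclusion ht23) : MvPolynomial ↥j.t A →ₐ[A] _)
          (fun d hd => hC23 ht23 d hd) _ (hr12 hs12 ht12 x)
      have t2 := hr23 hs23 ht23 (Set.inclusion hs12 x)
      have := Ideal.add_mem _ t1 t2
      rw [map_sub, sub_add_sub_cancel, rename_rename] at this
      exact this

/-- `B_i`. -/
abbrev Bo (i : Idx A B C g) : Type := MvPolynomial ↥i.s A ⧸ Ideal.span i.SB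

/-- `C_i`. -/
abbrev Co (i : Idx A B C g) : Type := MvPolynomial ↥i.t A ⧸ Ideal.span i.SC

variable {g}

@[simp] lemma liftₐ_mk {R S : Type} [CommRing R] [CommRing S] [Algebra A R] [Algebra A S]
    (I : Ideal R) (f : R →ₐ[A] S) (hI) (x : R) :
    Ideal.Quotient.liftₐ I f hI (Ideal.Quotient.mk I x) = f x := by
  rfl

attribute [-simp] Ideal.Quotient.liftₐ_apply

@[simp] lemma lift_coe_mk {R S : Type} [CommRing R] [CommRing S] [Algebra A R] [Algebra A S]
    (I : Ideal R) (f : R →ₐ[A] S) (hI) (x : R) :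
    Ideal.Quotient.lift I (f : R →+* S) hI (Ideal.Quotient.mk I x) = f x := rfl

noncomputable def toBo (i : Idx A B C g) : Bo g i →ₐ[A] B :=
  Ideal.Quotient.liftₐ _ (aeval fun x : ↥i.s => (x : B)) (span_apply_zero _ i.hSB)

noncomputable def toCo (i : Idx A B C g) : Co g i →ₐ[A] C :=
  Ideal.Quotient.liftₐ _ (aeval fun y : ↥i.t => (y : C)) (span_apply_zero _ i.hSC)

noncomputable def glo (i : Idx A B C g) : Bo g i →ₐ[A] Co g i :=
  Ideal.Quotient.liftₐ _ ((Ideal.Quotient.mkₐ A (Ideal.span i.SC)).comp (aeval i.r))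
    (span_apply_zero _ (fun p hp => by
      simp only [AlgHom.comp_apply, Ideal.Quotient.mkₐ_eq_mk, Ideal.Quotient.eq_zero_iff_mem]
      exact i.hglwd p hp))

noncomputable def tBo (i j : Idx A B C g) (h : i ≤ j) : Bo g i →ₐ[A] Bo g j :=
  Ideal.Quotient.liftₐ _
    ((Ideal.Quotient.mkₐ A (Ideal.span j.SB)).comp (rename (Set.inclusion h.1)))
    (span_apply_zero _ (fun p hp => by
      simp only [AlgHom.comp_apply, Ideal.Quotient.mkₐ_eq_mk, Ideal.Quotient.eq_zero_iff_mem]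
      exact h.2.2.1 h.1 p hp))

noncomputable def tCo (i j : Idx A B C g) (h : i ≤ j) : Co g i →ₐ[A] Co g j :=
  Ideal.Quotient.liftₐ _
    ((Ideal.Quotient.mkₐ A (Ideal.span j.SC)).comp (rename (Set.inclusion h.2.1)))
    (span_apply_zero _ (fun q hq => by
      simp only [AlgHom.comp_apply, Ideal.Quotient.mkₐ_eq_mk, Ideal.Quotient.eq_zero_iff_mem]
      exact h.2.2.2.1 h.2.1 q hq))

lemma bo_ext {i : Idx A B C g} {R : Type} [CommRing R] [Algebra A R] {f f' : Bo g i →ₐ[A] R}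
    (h : ∀ x, f (Ideal.Quotient.mk _ (X x)) = f' (Ideal.Quotient.mk _ (X x))) : f = f' := by
  apply Ideal.Quotient.algHom_ext
  apply MvPolynomial.algHom_ext
  intro x
  simpa using h x

lemma co_ext {i : Idx A B C g} {R : Type} [CommRing R] [Algebra A R] {f f' : Co g i →ₐ[A] R}
    (h : ∀ y, f (Ideal.Quotient.mk _ (X y)) = f' (Ideal.Quotient.mk _ (X y))) : f = f' := by
  apply Ideal.Quotient.algHom_ext
  apply MvPolynomial.algHom_ext
  intro y
  simpa using h y


lemma finBo (i : Idx A B C g) : Module.Finite A (Bo g i) := by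
  have : Finite ↥i.s := i.hs.to_subtype
  set mk := Ideal.Quotient.mkₐ A (Ideal.span i.SB) with hmk
  have hint : ∀ z ∈ Set.range fun x : ↥i.s => mk (X x), IsIntegral A z := by
    rintro z ⟨x, rfl⟩
    obtain ⟨p, hm, hmem⟩ := i.hmonB x
    refine ⟨p, hm, ?_⟩
    rw [← Polynomial.aeval_def]
    rw [show Polynomial.aeval ((fun x : ↥i.s => mk (X x)) x) p = mk (Polynomial.aeval (X x) p)
      from Polynomial.aeval_algHom_apply mk (X x) p]
    rw [Ideal.Quotient.mkₐ_eq_mk, Ideal.Quotient.eq_zero_iff_mem]; exact hmem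
  have hadj : Algebra.adjoin A (Set.range fun x : ↥i.s => mk (X x)) = ⊤ := by
    have h1 : (Set.range fun x : ↥i.s => mk (X x)) = mk '' Set.range X := by
      rw [← Set.range_comp]; rfl
    rw [h1, ← AlgHom.map_adjoin, adjoin_range_X, Algebra.map_top,
      AlgHom.range_eq_top]
    exact Ideal.Quotient.mkₐ_surjective A _
  refine ⟨?_⟩
  rw [← Algebra.top_toSubmodule, ← hadj]
  exact fg_adjoin_of_finite (Set.finite_range _) hint

lemma finCo (i : Idx A B C g) : Module.Finite A (Co g i) := by
  have : Finite ↥i.t := i.ht.to_subtype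
  set mk := Ideal.Quotient.mkₐ A (Ideal.span i.SC) with hmk
  have hint : ∀ z ∈ Set.range fun y : ↥i.t => mk (X y), IsIntegral A z := by
    rintro z ⟨y, rfl⟩
    obtain ⟨p, hm, hmem⟩ := i.hmonC y
    refine ⟨p, hm, ?_⟩
    rw [← Polynomial.aeval_def]
    rw [show Polynomial.aeval ((fun y : ↥i.t => mk (X y)) y) p = mk (Polynomial.aeval (X y) p)
      from Polynomial.aeval_algHom_apply mk (X y) p]
    rw [Ideal.Quotient.mkₐ_eq_mk, Ideal.Quotient.eq_zero_iff_mem]; exact hmem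
  have hadj : Algebra.adjoin A (Set.range fun y : ↥i.t => mk (X y)) = ⊤ := by
    have h1 : (Set.range fun y : ↥i.t => mk (X y)) = mk '' Set.range X := by
      rw [← Set.range_comp]; rfl
    rw [h1, ← AlgHom.map_adjoin, adjoin_range_X, Algebra.map_top,
      AlgHom.range_eq_top]
    exact Ideal.Quotient.mkₐ_surjective A _
  refine ⟨?_⟩
  rw [← Algebra.top_toSubmodule, ← hadj]
  exact fg_adjoin_of_finite (Set.finite_range _) hint

lemma fpBo (i : Idx A B C g) : Algebra.FinitePresentation A (Bo g i) := by
  have : Finite ↥i.s := i.hs.to_subtype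
  haveI : Algebra.FinitePresentation A (MvPolynomial ↥i.s A) :=
    inferInstance
  exact Algebra.FinitePresentation.quotient (Submodule.fg_span i.hSBfin)

lemma fpCo (i : Idx A B C g) : Algebra.FinitePresentation A (Co g i) := by
  have : Finite ↥i.t := i.ht.to_subtype
  haveI : Algebra.FinitePresentation A (MvPolynomial ↥i.t A) :=
    inferInstance
  exact Algebra.FinitePresentation.quotient (Submodule.fg_span i.hSCfin)


section Sup

variable (g)

/-- The substitution function for the supremum of two indices. -/
noncomputable def supR (i i' : Idx A B C g) : ↥(i.s ∪ i'.s) → MvPolynomial ↥(i.t ∪ i'.t) A :=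
  fun x =>
    letI := Classical.dec (x.1 ∈ i.s)
    if h : x.1 ∈ i.s then rename (Set.inclusion Set.subset_union_left) (i.r ⟨x.1, h⟩)
    else rename (Set.inclusion Set.subset_union_right) (i'.r ⟨x.1, x.2.resolve_left h⟩)

lemma supR_eval (i i' : Idx A B C g) (x : ↥(i.s ∪ i'.s)) :
    aeval (fun y : ↥(i.t ∪ i'.t) => (y : C)) (supR g i i' x) = g x.1 := by
  unfold supR
  split_ifs with h
  · rw [aeval_rename]; exact i.hr ⟨x.1, h⟩
  · rw [aeval_rename]; exact i'.hr ⟨x.1, x.2.resolve_left h⟩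

lemma supR_left (i i' : Idx A B C g) (x : ↥i.s) :
    supR g i i' (Set.inclusion Set.subset_union_left x)
      = rename (Set.inclusion Set.subset_union_left) (i.r x) := by
  unfold supR
  exact dif_pos x.2

/-- The supremum of two indices. -/
noncomputable def sup (i i' : Idx A B C g) : Idx A B C g where
  s := i.s ∪ i'.s
  hs := i.hs.union i'.hs
  t := i.t ∪ i'.t
  ht := i.ht.union i'.ht
  SB := (rename (Set.inclusion Set.subset_union_left) '' i.SB) ∪
        (rename (Set.inclusion Set.subset_union_right) '' i'.SB)
  hSBfin := (i.hSBfin.image _).union (i'.hSBfin.image _)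
  SC := ((rename (Set.inclusion Set.subset_union_left) '' i.SC) ∪
        (rename (Set.inclusion Set.subset_union_right) '' i'.SC)) ∪
        Set.range (fun x : ↥i'.s =>
          rename (Set.inclusion Set.subset_union_right) (i'.r x)
            - supR g i i' (Set.inclusion Set.subset_union_right x))
  hSCfin := by
    have : Finite ↥i'.s := i'.hs.to_subtype
    exact ((i.hSCfin.image _).union (i'.hSCfin.image _)).union (Set.finite_range _)
  r := supR g i i'
  hSB := by
    rintro p (⟨q, hq, rfl⟩ | ⟨q, hq, rfl⟩)
    · rw [aeval_rename]; exact i.hSB q hq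
    · rw [aeval_rename]; exact i'.hSB q hq
  hSC := by
    rintro q ((⟨p, hp, rfl⟩ | ⟨p, hp, rfl⟩) | ⟨x, rfl⟩)
    · rw [aeval_rename]; exact i.hSC p hp
    · rw [aeval_rename]; exact i'.hSC p hp
    · rw [map_sub, aeval_rename, supR_eval]
      rw [show aeval ((fun y : ↥(i.t ∪ i'.t) => (y : C)) ∘ Set.inclusion Set.subset_union_right)
            (i'.r x) = g x.1 from i'.hr x]
      exact sub_self _
  hmonB := by
    intro x
    rcases x.2 with h | h
    · obtain ⟨p, hm, hmem⟩ := i.hmonB ⟨x.1, h⟩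
      refine ⟨p, hm, ?_⟩
      have h2 := span_apply_mem
        (rename (Set.inclusion Set.subset_union_left) : MvPolynomial ↥i.s A →ₐ[A] _)
        (J := Ideal.span ((rename (Set.inclusion Set.subset_union_left) '' i.SB) ∪
          (rename (Set.inclusion Set.subset_union_right) '' i'.SB)))
        (fun q hq => Ideal.subset_span (Or.inl ⟨q, hq, rfl⟩)) _ hmem
      rwa [← Polynomial.aeval_algHom_apply, rename_X] at h2
    · obtain ⟨p, hm, hmem⟩ := i'.hmonB ⟨x.1, h⟩
      refine ⟨p, hm, ?_⟩
      have h2 := span_apply_mem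
        (rename (Set.inclusion Set.subset_union_right) : MvPolynomial ↥i'.s A →ₐ[A] _)
        (J := Ideal.span ((rename (Set.inclusion Set.subset_union_left) '' i.SB) ∪
          (rename (Set.inclusion Set.subset_union_right) '' i'.SB)))
        (fun q hq => Ideal.subset_span (Or.inr ⟨q, hq, rfl⟩)) _ hmem
      rwa [← Polynomial.aeval_algHom_apply, rename_X] at h2
  hmonC := by
    intro y
    rcases y.2 with h | h
    · obtain ⟨p, hm, hmem⟩ := i.hmonC ⟨y.1, h⟩
      refine ⟨p, hm, ?_⟩
      have h2 := span_apply_mem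
        (rename (Set.inclusion Set.subset_union_left) : MvPolynomial ↥i.t A →ₐ[A] _)
        (J := Ideal.span (((rename (Set.inclusion Set.subset_union_left) '' i.SC) ∪
          (rename (Set.inclusion Set.subset_union_right) '' i'.SC)) ∪
          Set.range (fun x : ↥i'.s =>
            rename (Set.inclusion Set.subset_union_right) (i'.r x)
              - supR g i i' (Set.inclusion Set.subset_union_right x))))
        (fun q hq => Ideal.subset_span (Or.inl (Or.inl ⟨q, hq, rfl⟩))) _ hmem
      rwa [← Polynomial.aeval_algHom_apply, rename_X] at h2
    · obtain ⟨p, hm, hmem⟩ := i'.hmonC ⟨y.1, h⟩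
      refine ⟨p, hm, ?_⟩
      have h2 := span_apply_mem
        (rename (Set.inclusion Set.subset_union_right) : MvPolynomial ↥i'.t A →ₐ[A] _)
        (J := Ideal.span (((rename (Set.inclusion Set.subset_union_left) '' i.SC) ∪
          (rename (Set.inclusion Set.subset_union_right) '' i'.SC)) ∪
          Set.range (fun x : ↥i'.s =>
            rename (Set.inclusion Set.subset_union_right) (i'.r x)
              - supR g i i' (Set.inclusion Set.subset_union_right x))))
        (fun q hq => Ideal.subset_span (Or.inl (Or.inr ⟨q, hq, rfl⟩))) _ hmem
      rwa [← Polynomial.aeval_algHom_apply, rename_X] at h2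
  hr := supR_eval g i i'
  hglwd := by
    rintro p (⟨q, hq, rfl⟩ | ⟨q, hq, rfl⟩)
    · rw [aeval_rename]
      have e : (supR g i i') ∘ (Set.inclusion Set.subset_union_left)
          = fun x : ↥i.s => rename (Set.inclusion Set.subset_union_left) (i.r x) :=
        funext (supR_left g i i')
      rw [e, show aeval (fun x : ↥i.s => rename (Set.inclusion Set.subset_union_left) (i.r x)) q
            = rename (Set.inclusion Set.subset_union_left) (aeval i.r q)
          from (comp_aeval_apply i.r (rename (Set.inclusion Set.subset_union_left)) q).symm]
      exact span_apply_mem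
        (rename (Set.inclusion Set.subset_union_left) : MvPolynomial ↥i.t A →ₐ[A] _)
        (fun d hd => Ideal.subset_span (Or.inl (Or.inl ⟨d, hd, rfl⟩))) _ (i.hglwd q hq)
    · rw [aeval_rename]
      have h1 : aeval ((supR g i i') ∘ Set.inclusion Set.subset_union_right) q
          - aeval (fun x : ↥i'.s => rename (Set.inclusion Set.subset_union_right) (i'.r x)) q
          ∈ Ideal.span (((rename (Set.inclusion Set.subset_union_left) '' i.SC) ∪
            (rename (Set.inclusion Set.subset_union_right) '' i'.SC)) ∪
            Set.range (fun x : ↥i'.s =>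
              rename (Set.inclusion Set.subset_union_right) (i'.r x)
                - supR g i i' (Set.inclusion Set.subset_union_right x))) := by
        refine aeval_sub_mem (fun x => ?_) q
        have hm : rename (Set.inclusion Set.subset_union_right) (i'.r x)
            - supR g i i' (Set.inclusion Set.subset_union_right x)
            ∈ Ideal.span (((rename (Set.inclusion Set.subset_union_left) '' i.SC) ∪
              (rename (Set.inclusion Set.subset_union_right) '' i'.SC)) ∪
              Set.range (fun x : ↥i'.s =>
                rename (Set.inclusion Set.subset_union_right) (i'.r x)
                  - supR g i i' (Set.inclusion Set.subset_union_right x))) :=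
          Ideal.subset_span (Or.inr ⟨x, rfl⟩)
        have := neg_mem hm
        rwa [neg_sub] at this
      have h2 : aeval (fun x : ↥i'.s => rename (Set.inclusion Set.subset_union_right) (i'.r x)) q
          = rename (Set.inclusion Set.subset_union_right) (aeval i'.r q) :=
        (comp_aeval_apply i'.r (rename (Set.inclusion Set.subset_union_right) :
          MvPolynomial ↥i'.t A →ₐ[A] MvPolynomial ↥(i.t ∪ i'.t) A) q).symm
      have h3 := span_apply_mem
        (rename (Set.inclusion Set.subset_union_right) : MvPolynomial ↥i'.t A →ₐ[A]
          MvPolynomial ↥(i.t ∪ i'.t) A)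
        (J := Ideal.span (((rename (Set.inclusion Set.subset_union_left) '' i.SC) ∪
          (rename (Set.inclusion Set.subset_union_right) '' i'.SC)) ∪
          Set.range (fun x : ↥i'.s =>
            rename (Set.inclusion Set.subset_union_right) (i'.r x)
              - supR g i i' (Set.inclusion Set.subset_union_right x))))
        (fun d hd => Ideal.subset_span (Or.inl (Or.inr ⟨d, hd, rfl⟩))) _ (i'.hglwd q hq)
      rw [← h2] at h3
      have h4 := Ideal.add_mem _ h1 h3
      rwa [sub_add_cancel] at h4

lemma le_sup_left (i i' : Idx A B C g) : i ≤ sup g i i' := by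
  refine ⟨Set.subset_union_left, Set.subset_union_left, ?_, ?_, ?_⟩
  · intro h p hp; exact Ideal.subset_span (Or.inl ⟨p, hp, rfl⟩)
  · intro h q hq; exact Ideal.subset_span (Or.inl (Or.inl ⟨q, hq, rfl⟩))
  · intro hs ht x
    rw [show (sup g i i').r (Set.inclusion hs x)
        = rename (Set.inclusion Set.subset_union_left) (i.r x) from supR_left g i i' x]
    rw [show rename (Set.inclusion ht) (i.r x)
        = rename (Set.inclusion Set.subset_union_left) (i.r x) from rfl]
    convert zero_mem (Ideal.span (sup g i i').SC) using 1; exact sub_self _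
lemma le_sup_right (i i' : Idx A B C g) : i' ≤ sup g i i' := by
  refine ⟨Set.subset_union_right, Set.subset_union_right, ?_, ?_, ?_⟩
  · intro h p hp; exact Ideal.subset_span (Or.inr ⟨p, hp, rfl⟩)
  · intro h q hq; exact Ideal.subset_span (Or.inl (Or.inr ⟨q, hq, rfl⟩))
  · intro hs ht x
    exact Ideal.subset_span (Or.inr ⟨x, rfl⟩)

end Sup


variable (g)

lemma aeval_polyaeval {σ R' : Type} [CommRing R'] [Algebra A R']
    (f : MvPolynomial σ A →ₐ[A] R') (z : MvPolynomial σ A) (p : Polynomial A) :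
    f (Polynomial.aeval z p) = Polynomial.aeval (f z) p :=
  (Polynomial.aeval_algHom_apply f z p).symm

/-- The empty index. -/
noncomputable def emptyIdx : Idx A B C g where
  s := ∅
  hs := Set.finite_empty
  t := ∅
  ht := Set.finite_empty
  SB := ∅
  hSBfin := Set.finite_empty
  SC := ∅
  hSCfin := Set.finite_empty
  r := fun x => absurd x.2 (Set.notMem_empty _)
  hSB := by simp
  hSC := by simp
  hmonB := fun x => absurd x.2 (Set.notMem_empty _)
  hmonC := fun y => absurd y.2 (Set.notMem_empty _)
  hr := fun x => absurd x.2 (Set.notMem_empty _)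
  hglwd := by simp

/-- Index with a single generator of `B` and its image in `C`. -/
noncomputable def singB (b : B) (p : Polynomial A) (hm : p.Monic)
    (hpb : Polynomial.aeval b p = 0) : Idx A B C g where
  s := {b}
  hs := Set.finite_singleton b
  t := {g b}
  ht := Set.finite_singleton (g b)
  SB := {Polynomial.aeval (X (⟨b, Set.mem_singleton b⟩ : ↥({b} : Set B))) p}
  hSBfin := Set.finite_singleton _
  SC := {Polynomial.aeval (X (⟨g b, Set.mem_singleton (g b)⟩ : ↥({g b} : Set C))) p}
  hSCfin := Set.finite_singleton _
  r := fun _ => X ⟨g b, Set.mem_singleton (g b)⟩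
  hSB := by
    rintro q rfl
    rw [aeval_polyaeval, aeval_X]
    exact hpb
  hSC := by
    rintro q rfl
    rw [aeval_polyaeval, aeval_X]
    show Polynomial.aeval (g b) p = 0
    rw [Polynomial.aeval_algHom_apply g b p, hpb, map_zero]
  hmonB := by
    intro x
    have hx : x = ⟨b, Set.mem_singleton b⟩ := Subtype.ext x.2
    rw [hx]
    exact ⟨p, hm, Ideal.subset_span rfl⟩
  hmonC := by
    intro y
    have hy : y = ⟨g b, Set.mem_singleton (g b)⟩ := Subtype.ext y.2
    rw [hy]
    exact ⟨p, hm, Ideal.subset_span rfl⟩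
  hr := by
    intro x
    have hx : (x : B) = b := x.2
    rw [aeval_X, hx]
  hglwd := by
    rintro q rfl
    rw [aeval_polyaeval, aeval_X]
    exact Ideal.subset_span rfl

/-- Index with a single generator of `C`. -/
noncomputable def singC (c : C) (p : Polynomial A) (hm : p.Monic)
    (hpc : Polynomial.aeval c p = 0) : Idx A B C g where
  s := ∅
  hs := Set.finite_empty
  t := {c}
  ht := Set.finite_singleton c
  SB := ∅
  hSBfin := Set.finite_empty
  SC := {Polynomial.aeval (X (⟨c, Set.mem_singleton c⟩ : ↥({c} : Set C))) p}
  hSCfin := Set.finite_singleton _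
  r := fun x => absurd x.2 (Set.notMem_empty _)
  hSB := by simp
  hSC := by
    rintro q rfl
    rw [aeval_polyaeval, aeval_X]
    exact hpc
  hmonB := fun x => absurd x.2 (Set.notMem_empty _)
  hmonC := by
    intro y
    have hy : y = ⟨c, Set.mem_singleton c⟩ := Subtype.ext y.2
    rw [hy]
    exact ⟨p, hm, Ideal.subset_span rfl⟩
  hr := fun x => absurd x.2 (Set.notMem_empty _)
  hglwd := by simp

variable {g}

/-- Enlarging an index by one more relation in `B`. -/
noncomputable def enlargeB (i : Idx A B C g) (d : MvPolynomial ↥i.s A)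
    (hd : aeval (fun x : ↥i.s => (x : B)) d = 0) : Idx A B C g where
  s := i.s
  hs := i.hs
  t := i.t
  ht := i.ht
  SB := i.SB ∪ {d}
  hSBfin := i.hSBfin.union (Set.finite_singleton _)
  SC := i.SC ∪ {aeval i.r d}
  hSCfin := i.hSCfin.union (Set.finite_singleton _)
  r := i.r
  hSB := by
    rintro p (hp | rfl)
    · exact i.hSB p hp
    · exact hd
  hSC := by
    rintro q (hq | rfl)
    · exact i.hSC q hq
    · rw [aeval_r_eval i.r i.hr d, hd, map_zero]
  hmonB := fun x => (i.hmonB x).imp fun p hp =>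
    ⟨hp.1, Ideal.span_mono Set.subset_union_left hp.2⟩
  hmonC := fun y => (i.hmonC y).imp fun p hp =>
    ⟨hp.1, Ideal.span_mono Set.subset_union_left hp.2⟩
  hr := i.hr
  hglwd := by
    rintro p (hp | rfl)
    · exact Ideal.span_mono Set.subset_union_left (i.hglwd p hp)
    · exact Ideal.subset_span (Or.inr rfl)

lemma le_enlargeB (i : Idx A B C g) (d : MvPolynomial ↥i.s A)
    (hd : aeval (fun x : ↥i.s => (x : B)) d = 0) : i ≤ enlargeB i d hd := by
  refine ⟨subset_rfl, subset_rfl, ?_, ?_, ?_⟩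
  · intro h p hp
    show rename (Set.inclusion (subset_rfl : i.s ⊆ i.s)) p ∈ Ideal.span (i.SB ∪ {d})
    rw [Set.inclusion_eq_id, rename_id]
    exact Ideal.subset_span (Or.inl hp)
  · intro h q hq
    show rename (Set.inclusion (subset_rfl : i.t ⊆ i.t)) q ∈ Ideal.span (i.SC ∪ {aeval i.r d})
    rw [Set.inclusion_eq_id, rename_id]
    exact Ideal.subset_span (Or.inl hq)
  · intro hs ht x
    show rename (Set.inclusion (subset_rfl : i.t ⊆ i.t)) (i.r x)
        - i.r (Set.inclusion (subset_rfl : i.s ⊆ i.s) x) ∈ Ideal.span (i.SC ∪ {aeval i.r d})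
    rw [Set.inclusion_eq_id, Set.inclusion_eq_id, rename_id]
    simp

/-- Enlarging an index by one more relation in `C`. -/
noncomputable def enlargeC (i : Idx A B C g) (d : MvPolynomial ↥i.t A)
    (hd : aeval (fun y : ↥i.t => (y : C)) d = 0) : Idx A B C g where
  s := i.s
  hs := i.hs
  t := i.t
  ht := i.ht
  SB := i.SB
  hSBfin := i.hSBfin
  SC := i.SC ∪ {d}
  hSCfin := i.hSCfin.union (Set.finite_singleton _)
  r := i.r
  hSB := i.hSB
  hSC := by
    rintro q (hq | rfl)
    · exact i.hSC q hq
    · exact hd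
  hmonB := i.hmonB
  hmonC := fun y => (i.hmonC y).imp fun p hp =>
    ⟨hp.1, Ideal.span_mono Set.subset_union_left hp.2⟩
  hr := i.hr
  hglwd := fun p hp => Ideal.span_mono Set.subset_union_left (i.hglwd p hp)

lemma le_enlargeC (i : Idx A B C g) (d : MvPolynomial ↥i.t A)
    (hd : aeval (fun y : ↥i.t => (y : C)) d = 0) : i ≤ enlargeC i d hd := by
  refine ⟨subset_rfl, subset_rfl, ?_, ?_, ?_⟩
  · intro h p hp
    show rename (Set.inclusion (subset_rfl : i.s ⊆ i.s)) p ∈ Ideal.span i.SB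
    rw [Set.inclusion_eq_id, rename_id]
    exact Ideal.subset_span hp
  · intro h q hq
    show rename (Set.inclusion (subset_rfl : i.t ⊆ i.t)) q ∈ Ideal.span (i.SC ∪ {d})
    rw [Set.inclusion_eq_id, rename_id]
    exact Ideal.subset_span (Or.inl hq)
  · intro hs ht x
    show rename (Set.inclusion (subset_rfl : i.t ⊆ i.t)) (i.r x)
        - i.r (Set.inclusion (subset_rfl : i.s ⊆ i.s) x) ∈ Ideal.span (i.SC ∪ {d})
    rw [Set.inclusion_eq_id, Set.inclusion_eq_id, rename_id]
    simp

end IASAux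
open MvPolynomial in
theorem statement_2 {A B C : Type} [CommRing A] [CommRing B] [CommRing C]
    [Algebra A B] [Algebra A C] (g : B →ₐ[A] C)
    (hB : Algebra.IsIntegral A B) (hC : (g : B →+* C).IsIntegral) :
    Nonempty (IntegralApproxSystem A B C g) := by
  classical
  refine ⟨{
    ι := IASAux.Idx A B C g
    pre := inferInstance
    directed := ⟨fun i i' => ⟨IASAux.sup g i i', IASAux.le_sup_left g i i',
      IASAux.le_sup_right g i i'⟩⟩
    ne := ⟨IASAux.emptyIdx g⟩
    Bo := IASAux.Bo g
    Co := IASAux.Co g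
    ringB := fun _ => inferInstance
    ringC := fun _ => inferInstance
    algB := fun _ => inferInstance
    algC := fun _ => inferInstance
    finB := IASAux.finBo
    fpB := IASAux.fpBo
    finC := IASAux.finCo
    fpC := IASAux.fpCo
    gl := IASAux.glo
    tB := IASAux.tBo
    tC := IASAux.tCo
    toB := IASAux.toBo
    toC := IASAux.toCo
    tB_id := fun i => by
      apply IASAux.bo_ext
      intro x
      simp [IASAux.tBo]
      erw [IASAux.lift_coe_mk]
      simp
    tC_id := fun i => by
      apply IASAux.co_ext
      intro y
      simp [IASAux.tCo]
      erw [IASAux.lift_coe_mk]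
      simp
    tB_comp := fun i j k hij hjk => by
      apply IASAux.bo_ext
      intro x
      simp [IASAux.tBo]
      erw [IASAux.lift_coe_mk]
      simp
      erw [IASAux.lift_coe_mk]
      simp
    tC_comp := fun i j k hij hjk => by
      apply IASAux.co_ext
      intro y
      simp [IASAux.tCo]
      erw [IASAux.lift_coe_mk]
      simp
      erw [IASAux.lift_coe_mk]
      simp
    square := fun i j hij => by
      apply IASAux.bo_ext
      intro x
      simp only [AlgHom.comp_apply, IASAux.tBo, IASAux.glo, IASAux.liftₐ_mk,
        Ideal.Quotient.mkₐ_eq_mk, rename_X, aeval_X]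
      exact (Ideal.Quotient.eq.2 (hij.2.2.2.2 hij.1 hij.2.1 x)).symm
    toB_comp := fun i j hij => by
      apply IASAux.bo_ext
      intro x
      simp [IASAux.tBo, IASAux.toBo]
      erw [IASAux.lift_coe_mk]
      simp
      erw [IASAux.lift_coe_mk]
      simp
    toC_comp := fun i j hij => by
      apply IASAux.co_ext
      intro y
      simp [IASAux.tCo, IASAux.toCo]
      erw [IASAux.lift_coe_mk]
      simp
      erw [IASAux.lift_coe_mk]
      simp
    compat := fun i => by
      apply IASAux.bo_ext
      intro x
      simp only [AlgHom.comp_apply, IASAux.toBo, IASAux.glo, IASAux.liftₐ_mk,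
        Ideal.Quotient.mkₐ_eq_mk, aeval_X]
      exact (i.hr x).symm
    jointly_surjB := fun b => by
      obtain ⟨p, hm, hpb⟩ := Algebra.isIntegral_def.mp hB b
      have hpb' : Polynomial.aeval b p = 0 := by rw [Polynomial.aeval_def]; exact hpb
      refine ⟨IASAux.singB g b p hm hpb',
        ⟨Ideal.Quotient.mk _ (X ⟨b, Set.mem_singleton b⟩), ?_⟩⟩
      simp [IASAux.toBo]
      erw [IASAux.lift_coe_mk]
      simp
    jointly_surjC := fun c => by
      have h1 : (algebraMap A B).IsIntegral := fun x => Algebra.isIntegral_def.mp hB x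
      have h3 := RingHom.IsIntegral.trans (f := algebraMap A B) (g := (g : B →+* C)) h1 hC
      rw [g.comp_algebraMap] at h3
      obtain ⟨p, hm, hpc⟩ := h3 c
      have hpc' : Polynomial.aeval c p = 0 := by rw [Polynomial.aeval_def]; exact hpc
      refine ⟨IASAux.singC g c p hm hpc',
        ⟨Ideal.Quotient.mk _ (X ⟨c, Set.mem_singleton c⟩), ?_⟩⟩
      simp [IASAux.toCo]
      erw [IASAux.lift_coe_mk]
      simp
    eventually_eqB := fun i x y h => by
      obtain ⟨px, rfl⟩ := Ideal.Quotient.mk_surjective x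
      obtain ⟨py, rfl⟩ := Ideal.Quotient.mk_surjective y
      have hd : aeval (fun z : ↥i.s => (z : B)) (px - py) = 0 := by
        simp only [IASAux.toBo, IASAux.liftₐ_mk] at h
        rw [map_sub, h, sub_self]
      refine ⟨IASAux.enlargeB i (px - py) hd, IASAux.le_enlargeB i _ hd, ?_⟩
      have e1 : IASAux.tBo i _ (IASAux.le_enlargeB i _ hd) (Ideal.Quotient.mk _ px)
          = Ideal.Quotient.mk _ (rename (Set.inclusion (IASAux.le_enlargeB i _ hd).1) px) := by
        simp [IASAux.tBo]
        erw [IASAux.lift_coe_mk]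
      have e2 : IASAux.tBo i _ (IASAux.le_enlargeB i _ hd) (Ideal.Quotient.mk _ py)
          = Ideal.Quotient.mk _ (rename (Set.inclusion (IASAux.le_enlargeB i _ hd).1) py) := by
        simp [IASAux.tBo]
        erw [IASAux.lift_coe_mk]
      rw [e1, e2]
      refine Ideal.Quotient.eq.2 ?_
      rw [← map_sub]
      show rename (Set.inclusion (subset_rfl : i.s ⊆ i.s)) (px - py)
        ∈ Ideal.span (i.SB ∪ {px - py})
      rw [Set.inclusion_eq_id, rename_id]
      exact Ideal.subset_span (Or.inr rfl)
    eventually_eqC := fun i x y h => by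
      obtain ⟨px, rfl⟩ := Ideal.Quotient.mk_surjective x
      obtain ⟨py, rfl⟩ := Ideal.Quotient.mk_surjective y
      have hd : aeval (fun z : ↥i.t => (z : C)) (px - py) = 0 := by
        simp only [IASAux.toCo, IASAux.liftₐ_mk] at h
        rw [map_sub, h, sub_self]
      refine ⟨IASAux.enlargeC i (px - py) hd, IASAux.le_enlargeC i _ hd, ?_⟩
      have e1 : IASAux.tCo i _ (IASAux.le_enlargeC i _ hd) (Ideal.Quotient.mk _ px)
          = Ideal.Quotient.mk _ (rename (Set.inclusion (IASAux.le_enlargeC i _ hd).2.1) px) := by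
        simp [IASAux.tCo]
        erw [IASAux.lift_coe_mk]
      have e2 : IASAux.tCo i _ (IASAux.le_enlargeC i _ hd) (Ideal.Quotient.mk _ py)
          = Ideal.Quotient.mk _ (rename (Set.inclusion (IASAux.le_enlargeC i _ hd).2.1) py) := by
        simp [IASAux.tCo]
        erw [IASAux.lift_coe_mk]
      rw [e1, e2]
      refine Ideal.Quotient.eq.2 ?_
      rw [← map_sub]
      show rename (Set.inclusion (subset_rfl : i.t ⊆ i.t)) (px - py)
        ∈ Ideal.span (i.SC ∪ {px - py})
      rw [Set.inclusion_eq_id, rename_id]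
      exact Ideal.subset_span (Or.inr rfl) }⟩
end

section
/- Let A be a noetherian ring and F : Mod_A → Ab an additive, half-exact functor commuting with filtered colimits such that F(M) is a finitely generated A-module for every finitely generated A-module M (boundedness). If F(κ(t)) = 0 for every maximal ideal t of A (where κ(t) = A/t), then F(M) = 0 for all A-modules M. -/
/-!
Statement 5 (Ogus–Bergman Nakayama lemma for half-exact functors):
Let `A` be a noetherian ring and `F : Mod_A → Ab` an additive, half-exact functor
commuting with filtered colimits such that `F(M)` is a finitely generated `A`-module for
every finitely generated `A`-module `M`.  (Such a functor, together with the canonical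
`A`-module structure on its values, is encoded as an additive `A`-linear functor
`ModuleCat A ⥤ ModuleCat A`.)  If `F(A/m) = 0` for every maximal ideal `m` of `A`, then
`F(M) = 0` for all `A`-modules `M`.
-/

open CategoryTheory Limits

/-- A functor on modules is half-exact if it preserves exactness in the middle of
short exact sequences. -/
def IsHalfExact {A : Type} [CommRing A] (F : ModuleCat A ⥤ ModuleCat A) : Prop :=
  ∀ (M N P : ModuleCat A) (f : M ⟶ N) (g : N ⟶ P),
    Function.Injective f → Function.Surjective g → Function.Exact f g →
      Function.Exact (F.map f) (F.map g)

set_option linter.unusedSectionVars false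

section Aux
variable {A : Type} [CommRing A] (F : ModuleCat A ⥤ ModuleCat A) [F.Additive] [F.Linear A]

lemma aux_iso_sub {X Y : ModuleCat A} (i : X ≅ Y) (h : Subsingleton Y) : Subsingleton X :=
  ((forget (ModuleCat A)).mapIso i).toEquiv.subsingleton

lemma aux_equiv {X Y : Type} [AddCommGroup X] [Module A X] [AddCommGroup Y] [Module A Y]
    (e : X ≃ₗ[A] Y) (h : Subsingleton (F.obj (ModuleCat.of A Y))) :
    Subsingleton (F.obj (ModuleCat.of A X)) :=
  aux_iso_sub (F.mapIso e.toModuleIso) h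

lemma aux_zero (M : ModuleCat A) (h : Subsingleton M) : Subsingleton (F.obj M) := by
  have hz : IsZero (F.obj M) := F.map_isZero (ModuleCat.isZero_of_subsingleton M)
  have : Subsingleton PUnit := inferInstance
  exact aux_iso_sub (hz.iso (ModuleCat.isZero_of_subsingleton (ModuleCat.of A PUnit))) this

lemma aux_halfexact (hhe : IsHalfExact F) (X : ModuleCat A) (S : Submodule A X)
    (h1 : Subsingleton (F.obj (ModuleCat.of A S)))
    (h2 : Subsingleton (F.obj (ModuleCat.of A (X ⧸ S)))) :
    Subsingleton (F.obj X) := by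
  let f : ModuleCat.of A S ⟶ X := ModuleCat.ofHom S.subtype
  let g : X ⟶ ModuleCat.of A (X ⧸ S) := ModuleCat.ofHom S.mkQ
  have he : Function.Exact (F.map f) (F.map g) :=
    hhe _ _ _ f g S.injective_subtype S.mkQ_surjective (LinearMap.exact_subtype_mkQ S)
  have hall : ∀ y : F.obj X, y = 0 := by
    intro y
    have h0 : (F.map g) y = 0 := Subsingleton.elim _ _
    obtain ⟨z, hz⟩ := (he y).mp h0
    rw [← hz, Subsingleton.elim z 0, map_zero]
  exact ⟨fun a b => by rw [hall a, hall b]⟩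

end Aux

section Dev
variable {A : Type} [CommRing A] [IsNoetherianRing A]
  (F : ModuleCat A ⥤ ModuleCat A) [F.Additive] [F.Linear A]

set_option linter.unusedSectionVars false in
lemma aux_dev (hhe : IsHalfExact F) (M : ModuleCat A) [IsNoetherian A M]
    (H : ∀ p : Ideal A, p.IsPrime → Module.annihilator A M ≤ p →
      Subsingleton (F.obj (ModuleCat.of A (A ⧸ p)))) :
    Subsingleton (F.obj M) := by
  have key : ∀ N : Submodule A M, Subsingleton (F.obj (ModuleCat.of A (M ⧸ N))) := by
    have wf : WellFounded ((· > ·) : Submodule A M → Submodule A M → Prop) :=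
      (inferInstance : IsNoetherian A M).wf
    intro N
    induction N using WellFounded.induction wf with
    | _ N IH =>
    by_cases hs : Subsingleton (M ⧸ N)
    · exact aux_zero F _ hs
    · rw [not_subsingleton_iff_nontrivial] at hs
      obtain ⟨p, hp⟩ := associatedPrimes.nonempty A (M ⧸ N)
      obtain ⟨hprime, x, hx⟩ := isAssociatedPrime_iff.mp hp
      replace hx : p = (A ∙ x).annihilator := by
        rw [hx]; ext a
        rw [Submodule.mem_colon_singleton, Submodule.mem_annihilator_span_singleton,
          Submodule.mem_bot]
      have hx0 : x ≠ 0 := by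
        rintro rfl
        apply hprime.ne_top
        rw [hx, eq_top_iff]
        intro a _
        rw [Submodule.mem_annihilator_span_singleton, smul_zero]
      -- S ≅ A ⧸ p
      have htor : p = Ideal.torsionOf A (M ⧸ N) x := by
        rw [hx]; ext a
        rw [Submodule.mem_annihilator_span_singleton, Ideal.mem_torsionOf_iff]
      have equivS : (A ⧸ p) ≃ₗ[A] ↥(A ∙ x) :=
        (Submodule.quotEquivOfEq p _ htor).trans
          (Ideal.quotTorsionOfEquivSpanSingleton A (M ⧸ N) x)
      -- annihilator condition
      have hann : Module.annihilator A M ≤ p := by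
        intro a ha
        rw [hx, Submodule.mem_annihilator_span_singleton]
        obtain ⟨m, rfl⟩ := N.mkQ_surjective x
        rw [← map_smul, Module.mem_annihilator.mp ha m, map_zero]
      have h1 : Subsingleton (F.obj (ModuleCat.of A ↥(A ∙ x))) :=
        aux_equiv F equivS.symm (H p hprime hann)
      -- N' 
      set N' : Submodule A M := (A ∙ x).comap N.mkQ with hN'
      have hle : N ≤ N' := by
        intro m hm
        rw [Submodule.mem_comap]
        have : N.mkQ m = 0 := by
          rw [Submodule.mkQ_apply]; exact (Submodule.Quotient.mk_eq_zero N).mpr hm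
        rw [this]; exact Submodule.zero_mem _
      have hlt : N < N' := by
        rcases lt_or_eq_of_le hle with h | h
        · exact h
        · exfalso
          obtain ⟨m, rfl⟩ := N.mkQ_surjective x
          apply hx0
          have hmem : m ∈ N' := by
            rw [Submodule.mem_comap]; exact Submodule.mem_span_singleton_self _
          rw [← h] at hmem
          rw [Submodule.mkQ_apply]
          exact (Submodule.Quotient.mk_eq_zero N).mpr hmem
      have hmap : N'.map N.mkQ = A ∙ x := by
        rw [hN', Submodule.map_comap_eq, Submodule.range_mkQ, top_inf_eq]
      have equivQ : ((M ⧸ N) ⧸ (A ∙ x)) ≃ₗ[A] (M ⧸ N') := by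
        rw [← hmap]
        exact Submodule.quotientQuotientEquivQuotient N N' hle
      have h2 : Subsingleton (F.obj (ModuleCat.of A ((M ⧸ N) ⧸ (A ∙ x)))) :=
        aux_equiv F equivQ (IH N' hlt)
      exact aux_halfexact F hhe (ModuleCat.of A (M ⧸ N)) (A ∙ x) h1 h2
  have := key ⊥
  exact aux_equiv F (Submodule.quotEquivOfEqBot (⊥ : Submodule A M) rfl).symm this

end Dev

section Prime
variable {A : Type} [CommRing A] [IsNoetherianRing A]
  (F : ModuleCat A ⥤ ModuleCat A) [F.Additive] [F.Linear A]

set_option linter.unusedSectionVars false in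
lemma aux_prime (hhe : IsHalfExact F)
    (hbdd : ∀ M : ModuleCat A, Module.Finite A M → Module.Finite A (F.obj M))
    (hres : ∀ m : Ideal A, m.IsMaximal → Subsingleton (F.obj (ModuleCat.of A (A ⧸ m)))) :
    ∀ p : Ideal A, p.IsPrime → Subsingleton (F.obj (ModuleCat.of A (A ⧸ p))) := by
  have wf : WellFounded ((· > ·) : Ideal A → Ideal A → Prop) :=
    (inferInstance : IsNoetherian A A).wf
  intro p
  induction p using WellFounded.induction wf with
  | _ p IH =>
  intro hp
  by_cases hmax : p.IsMaximal
  · exact hres p hmax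
  set B : ModuleCat A := ModuleCat.of A (A ⧸ p) with hB
  have hsmulB : ∀ s : A, s ∈ p → ∀ b : B, s • b = 0 := by
    intro s hs b
    obtain ⟨a, rfl⟩ := Submodule.mkQ_surjective p b
    show s • (p.mkQ a : A ⧸ p) = 0
    rw [← map_smul, Submodule.mkQ_apply, Submodule.Quotient.mk_eq_zero]
    simpa [smul_eq_mul] using Ideal.mul_mem_right a p hs
  -- p annihilates F.obj B
  have hsmul_zero : ∀ s : A, s ∈ p → ∀ y : F.obj B, s • y = 0 := by
    intro s hs y
    have hz : s • (𝟙 B : B ⟶ B) = 0 := by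
      apply ModuleCat.hom_ext; apply LinearMap.ext; intro b
      exact hsmulB s hs b
    have heq : (s • (𝟙 (F.obj B)) : F.obj B ⟶ F.obj B) = 0 := by
      rw [← F.map_id, ← F.map_smul, hz, F.map_zero]
    exact congrArg (fun φ : F.obj B ⟶ F.obj B => φ.hom y) heq
  suffices hall : ∀ y : F.obj B, y = 0 by exact ⟨fun a b => by rw [hall a, hall b]⟩
  by_contra hcon
  push_neg at hcon
  obtain ⟨y₀, hy₀⟩ := hcon
  set J : Ideal A := Module.annihilator A (F.obj B) with hJ
  have hJtop : J ≠ ⊤ := by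
    intro h
    apply hy₀
    have : (1 : A) ∈ J := h ▸ Submodule.mem_top
    simpa using Module.mem_annihilator.mp this y₀
  obtain ⟨m, hm, hJm⟩ := Ideal.exists_le_maximal J hJtop
  have hpJ : p ≤ J := fun s hs => Module.mem_annihilator.mpr (hsmul_zero s hs)
  have hpm : p < m := lt_of_le_of_ne (le_trans hpJ hJm) (fun h => hmax (h ▸ hm))
  obtain ⟨t, htm, htp⟩ := SetLike.exists_of_lt hpm
  -- multiplication by t on B
  set μ : B ⟶ B := t • (𝟙 B) with hμ
  have hμ_apply : ∀ b : B, μ b = t • b := fun _ => rfl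
  have hinj : Function.Injective μ := by
    intro b1 b2 h
    rw [hμ_apply, hμ_apply] at h
    obtain ⟨a1, rfl⟩ := Submodule.mkQ_surjective p b1
    obtain ⟨a2, rfl⟩ := Submodule.mkQ_surjective p b2
    simp only [Submodule.mkQ_apply] at h ⊢
    rw [← Submodule.Quotient.mk_smul, ← Submodule.Quotient.mk_smul, Submodule.Quotient.eq] at h
    rw [Submodule.Quotient.eq]
    have he : t • a1 - t • a2 = t * (a1 - a2) := by simp only [smul_eq_mul]; ring
    rw [he] at h
    rcases hp.mem_or_mem h with h' | h'
    · exact absurd h' htp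
    · exact h'
  set T : Submodule A B := LinearMap.range μ.hom with hT
  have hexact : Function.Exact μ.hom T.mkQ := LinearMap.exact_map_mkQ_range _
  have hBfin : Module.Finite A B :=
    Module.Finite.of_surjective (p.mkQ) (Submodule.mkQ_surjective p)
  have hBnoeth : IsNoetherian A B :=
    isNoetherian_of_surjective (p.mkQ) (by rw [Submodule.range_mkQ])
  have hC : Subsingleton (F.obj (ModuleCat.of A ((B : Type) ⧸ T))) := by
    haveI : IsNoetherian A ↥(ModuleCat.of A ((B : Type) ⧸ T)) :=
      (isNoetherian_quotient T : IsNoetherian A ((B : Type) ⧸ T))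
    apply aux_dev F hhe (ModuleCat.of A ((B : Type) ⧸ T))
    intro q hq hannq
    have hpq : p < q := by
      have hpann : p ≤ Module.annihilator A ((B : Type) ⧸ T) := by
        intro s hs
        rw [Module.mem_annihilator]
        intro c
        obtain ⟨b, rfl⟩ := Submodule.mkQ_surjective T c
        rw [← map_smul, hsmulB s hs b, map_zero]
      have htann : t ∈ Module.annihilator A ((B : Type) ⧸ T) := by
        rw [Module.mem_annihilator]
        intro c
        obtain ⟨b, rfl⟩ := Submodule.mkQ_surjective T c
        rw [← map_smul, Submodule.mkQ_apply, Submodule.Quotient.mk_eq_zero]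
        exact ⟨b, (hμ_apply b).symm⟩
      have hple : p ≤ q := le_trans hpann hannq
      exact lt_of_le_of_ne hple (fun h => htp (h ▸ hannq htann))
    exact IH q hpq hq
  -- every element of F(B) is divisible by t
  have hdiv : ∀ y : F.obj B, ∃ z : F.obj B, t • z = y := by
    intro y
    let g : B ⟶ ModuleCat.of A ((B : Type) ⧸ T) := ModuleCat.ofHom T.mkQ
    have hexF := hhe B B (ModuleCat.of A ((B : Type) ⧸ T)) μ g hinj
      (Submodule.mkQ_surjective T) hexact
    have h0 : (F.map g) y = 0 := Subsingleton.elim _ _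
    obtain ⟨z, hz⟩ := (hexF y).mp h0
    refine ⟨z, ?_⟩
    have hFμ : F.map μ = t • (𝟙 (F.obj B)) := by rw [hμ, F.map_smul, F.map_id]
    calc t • z = (t • 𝟙 (F.obj B) : F.obj B ⟶ F.obj B) z := rfl
      _ = (F.map μ) z := by rw [hFμ]
      _ = y := hz
  -- Nakayama
  have hFfin : Module.Finite A (F.obj B) := hbdd B hBfin
  have hle : (⊤ : Submodule A (F.obj B)) ≤ m • ⊤ := by
    intro y _
    obtain ⟨z, hz⟩ := hdiv y
    rw [← hz]
    exact Submodule.smul_mem_smul htm Submodule.mem_top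
  obtain ⟨r, hr1, hr0⟩ :=
    Submodule.exists_sub_one_mem_and_smul_eq_zero_of_fg_of_le_smul m ⊤ hFfin.fg_top hle
  have hrJ : r ∈ J := Module.mem_annihilator.mpr (fun y => hr0 y Submodule.mem_top)
  have : (1 : A) ∈ m := by
    have := m.sub_mem (hJm hrJ) hr1
    simpa using this
  exact hm.ne_top (Ideal.eq_top_iff_one m |>.mpr this)

end Prime

section Colim
variable {A : Type} [CommRing A]

/-- Index category: finitely generated submodules of `M`. -/
abbrev FGSub (M : ModuleCat A) : Type := {N : Submodule A M // N.FG}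

instance (M : ModuleCat A) : Nonempty (FGSub M) := ⟨⟨⊥, Submodule.fg_bot⟩⟩

instance (M : ModuleCat A) : IsDirected (FGSub M) (· ≤ ·) :=
  ⟨fun N₁ N₂ => ⟨⟨N₁.1 ⊔ N₂.1, Submodule.FG.sup N₁.2 N₂.2⟩,
    Subtype.mk_le_mk.mpr le_sup_left, Subtype.mk_le_mk.mpr le_sup_right⟩⟩

/-- The diagram of finitely generated submodules. -/
def fgDiagram (M : ModuleCat A) : FGSub M ⥤ ModuleCat A where
  obj N := ModuleCat.of A N.1
  map {_ _} f := ModuleCat.ofHom <| Submodule.inclusion (Subtype.coe_le_coe.mpr (leOfHom f))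
  map_id _ := rfl
  map_comp _ _ := rfl

/-- The canonical cocone on the diagram of finitely generated submodules. -/
def fgCocone (M : ModuleCat A) : Cocone (fgDiagram M) where
  pt := M
  ι := { app := fun N => ModuleCat.ofHom N.1.subtype
         naturality := fun N N' f => by ext x; rfl }

variable {M : ModuleCat A} (s : Cocone (fgDiagram M))

/-- The underlying function of the map out of the colimit. -/
def fgDescFun (x : M) : s.pt :=
  s.ι.app ⟨A ∙ x, Submodule.fg_span_singleton _⟩ ⟨x, Submodule.mem_span_singleton_self _⟩

lemma fgCompat (j : FGSub M) (y : j.1) : s.ι.app j y = fgDescFun s (y : M) := by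
  let j' : FGSub M := ⟨A ∙ (y : M), Submodule.fg_span_singleton _⟩
  have hle : j' ≤ j := Subtype.mk_le_mk.mpr
    ((Submodule.span_singleton_le_iff_mem _ _).mpr y.2)
  have h := congrArg (fun (φ : (fgDiagram M).obj j' ⟶ s.pt) =>
    φ ⟨(y : M), Submodule.mem_span_singleton_self _⟩) (s.w (homOfLE hle))
  exact h

/-- The linear map out of the colimit. -/
def fgDesc : M ⟶ s.pt := ModuleCat.ofHom {
  toFun := fgDescFun s
  map_add' := fun x y => by
    let j : FGSub M := ⟨(A ∙ x) ⊔ (A ∙ y),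
      Submodule.FG.sup (Submodule.fg_span_singleton _) (Submodule.fg_span_singleton _)⟩
    have hx : x ∈ j.1 := Submodule.mem_sup_left (Submodule.mem_span_singleton_self x)
    have hy : y ∈ j.1 := Submodule.mem_sup_right (Submodule.mem_span_singleton_self y)
    have hxy : x + y ∈ j.1 := j.1.add_mem hx hy
    have e1 : fgDescFun s (x + y) = s.ι.app j ⟨x + y, hxy⟩ := (fgCompat s j ⟨x + y, hxy⟩).symm
    have e2 : fgDescFun s x = s.ι.app j ⟨x, hx⟩ := (fgCompat s j ⟨x, hx⟩).symm
    have e3 : fgDescFun s y = s.ι.app j ⟨y, hy⟩ := (fgCompat s j ⟨y, hy⟩).symm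
    rw [e1, e2, e3, show (⟨x + y, hxy⟩ : j.1) = ⟨x, hx⟩ + ⟨y, hy⟩ from rfl]
    exact (s.ι.app j).hom.map_add ⟨x, hx⟩ ⟨y, hy⟩
  map_smul' := fun a x => by
    let j : FGSub M := ⟨A ∙ x, Submodule.fg_span_singleton _⟩
    have hx : x ∈ j.1 := Submodule.mem_span_singleton_self x
    have hax : a • x ∈ j.1 := j.1.smul_mem a hx
    have e1 : fgDescFun s (a • x) = s.ι.app j ⟨a • x, hax⟩ := (fgCompat s j ⟨a • x, hax⟩).symm
    have e2 : fgDescFun s x = s.ι.app j ⟨x, hx⟩ := (fgCompat s j ⟨x, hx⟩).symm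
    show fgDescFun s (a • x) = (RingHom.id A) a • fgDescFun s x
    rw [e1, e2, show (⟨a • x, hax⟩ : j.1) = a • ⟨x, hx⟩ from rfl]
    exact (s.ι.app j).hom.map_smul a ⟨x, hx⟩ }

def fgIsColimit (M : ModuleCat A) : IsColimit (fgCocone M) where
  desc s := fgDesc s
  fac s j := by
    ext y
    exact (fgCompat s j y).symm
  uniq s φ hφ := by
    ext x
    have h := congrArg
      (fun (ψ : (fgDiagram M).obj ⟨A ∙ x, Submodule.fg_span_singleton _⟩ ⟶ s.pt)
        => ψ ⟨x, Submodule.mem_span_singleton_self _⟩)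
      (hφ ⟨A ∙ x, Submodule.fg_span_singleton _⟩)
    exact h

end Colim

theorem statement_5 {A : Type} [CommRing A] [IsNoetherianRing A]
    (F : ModuleCat A ⥤ ModuleCat A) [F.Additive] [F.Linear A]
    [PreservesFilteredColimits F]
    (hhe : IsHalfExact F)
    (hbdd : ∀ M : ModuleCat A, Module.Finite A M → Module.Finite A (F.obj M))
    (hres : ∀ m : Ideal A, m.IsMaximal → Subsingleton (F.obj (ModuleCat.of A (A ⧸ m)))) :
    ∀ M : ModuleCat A, Subsingleton (F.obj M) := by
  have hfg : ∀ (N : ModuleCat A), Module.Finite A N → Subsingleton (F.obj N) := by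
    intro N hN
    haveI := hN
    haveI : IsNoetherian A N := isNoetherian_of_isNoetherianRing_of_finite A N
    exact aux_dev F hhe N (fun p hp _ => aux_prime F hhe hbdd hres p hp)
  intro M
  haveI := preservesSmallestFilteredColimits_of_preservesFilteredColimits F
  have hFc : IsColimit (F.mapCocone (fgCocone M)) := isColimitOfPreserves F (fgIsColimit M)
  have hzero : ∀ j : FGSub M, IsZero ((fgDiagram M ⋙ F).obj j) := by
    intro j
    have hfin : Module.Finite A ↥((fgDiagram M).obj j) := Module.Finite.iff_fg.mpr j.2
    exact @ModuleCat.isZero_of_subsingleton A _ ((fgDiagram M ⋙ F).obj j) (hfg _ hfin)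
  let c0 : Cocone (fgDiagram M ⋙ F) :=
    { pt := ModuleCat.of A PUnit
      ι := { app := fun j => 0, naturality := by intros; simp } }
  have h0 : IsColimit c0 :=
    IsColimit.ofIsZero c0 (Functor.isZero _ hzero) (ModuleCat.isZero_of_subsingleton _)
  have i : F.obj M ≅ ModuleCat.of A PUnit := hFc.coconePointUniqueUpToIso h0
  haveI : Subsingleton ((forget (ModuleCat A)).obj (ModuleCat.of A PUnit)) :=
    (inferInstance : Subsingleton PUnit)
  exact ((forget (ModuleCat A)).mapIso i).toEquiv.subsingleton
end

section
/- Let A be a noetherian ring and consider an exact sequence of additive functors H_1 → H_2 → H_3 → H_4 from Mod_A to Ab (exact means pointwise exact on every A-module). Suppose A is an integral domain. If H_1 and H_3 are GS (generically surjective: there is a dense open U ⊆ Spec A such that H_i(A) ⊗_A κ(u) → H_i(κ(u)) is surjective for all finite type points u ∈ U), H_4 is GI (generically injective) and weakly bounded, and all functors commute with filtered colimits, then H_2 is GS. -/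
/-!
Statement 9 (Lemma `lem:cons_inj_surj` (5a), four-lemma for GS): Let `A` be a noetherian
integral domain and `H₁ → H₂ → H₃ → H₄` a pointwise exact sequence of additive functors
`Mod_A → Ab` (encoded as additive `A`-linear functors `ModuleCat A ⥤ ModuleCat A`)
commuting with filtered colimits.  If `H₁` and `H₃` are GS (generically surjective), and
`H₄` is GI (generically injective) and weakly bounded, then `H₂` is GS.
-/

open CategoryTheory TensorProduct Limits

noncomputable def natMap {A : Type} [CommRing A]
    (F : ModuleCat A ⥤ ModuleCat A) [F.Additive] [F.Linear A]
    (L : Type) [AddCommGroup L] [Module A L] :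
    TensorProduct A (F.obj (ModuleCat.of A A)) L →ₗ[A] F.obj (ModuleCat.of A L) :=
  TensorProduct.lift ((ModuleCat.homLinearEquiv (S := A)).toLinearMap.comp
      ((Functor.mapLinearMap (R := A) (F := F)
      (X := ModuleCat.of A A) (Y := ModuleCat.of A L)).comp
      ((ModuleCat.homLinearEquiv (S := A)).symm.toLinearMap.comp
      (LinearMap.ringLmapEquivSelf A A L).symm.toLinearMap))).flip

def IsFiniteTypePoint {A : Type} [CommRing A] (u : PrimeSpectrum A) : Prop :=
  Algebra.FiniteType A (FractionRing (A ⧸ u.asIdeal))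

/-- Generically injective. -/
def IsGI {A : Type} [CommRing A]
    (F : ModuleCat A ⥤ ModuleCat A) [F.Additive] [F.Linear A] : Prop :=
  ∃ U : Set (PrimeSpectrum A), IsOpen U ∧ Dense U ∧
    ∀ u ∈ U, IsFiniteTypePoint u →
      Function.Injective (natMap F (FractionRing (A ⧸ u.asIdeal)))

/-- Generically surjective. -/
def IsGS {A : Type} [CommRing A]
    (F : ModuleCat A ⥤ ModuleCat A) [F.Additive] [F.Linear A] : Prop :=
  ∃ U : Set (PrimeSpectrum A), IsOpen U ∧ Dense U ∧
    ∀ u ∈ U, IsFiniteTypePoint u →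
      Function.Surjective (natMap F (FractionRing (A ⧸ u.asIdeal)))

/-! ### Auxiliary lemmas -/

lemma natMap_tmul {A : Type} [CommRing A]
    (F : ModuleCat A ⥤ ModuleCat A) [F.Additive] [F.Linear A]
    (L : Type) [AddCommGroup L] [Module A L] (x : F.obj (ModuleCat.of A A)) (l : L) :
    natMap F L (x ⊗ₜ l) =
      F.map (ModuleCat.ofHom ((LinearMap.ringLmapEquivSelf A A L).symm l : A →ₗ[A] L) :
        ModuleCat.of A A ⟶ ModuleCat.of A L) x := rfl

lemma natMap_naturality {A : Type} [CommRing A]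
    {F G : ModuleCat A ⥤ ModuleCat A} [F.Additive] [F.Linear A] [G.Additive] [G.Linear A]
    (τ : F ⟶ G) (L : Type) [AddCommGroup L] [Module A L]
    (z : TensorProduct A (F.obj (ModuleCat.of A A)) L) :
    τ.app (ModuleCat.of A L) (natMap F L z) =
      natMap G L (LinearMap.rTensor L (τ.app (ModuleCat.of A A)).hom z) := by
  induction z using TensorProduct.induction_on with
  | zero => simp
  | tmul x l =>
      rw [LinearMap.rTensor_tmul, natMap_tmul, natMap_tmul]
      exact (ConcreteCategory.congr_hom (τ.naturality
        (show ModuleCat.of A A ⟶ ModuleCat.of A L from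
          ModuleCat.ofHom ((LinearMap.ringLmapEquivSelf A A L).symm l))) x :)
  | add a b ha hb => simp [map_add, ha, hb]

set_option maxHeartbeats 1000000 in
set_option synthInstance.maxHeartbeats 400000 in
/-- The key "generic flatness" input: if the quotient `M ⧸ C` is free after localizing at
`u`, then `C ⊗ κ(u) → M ⊗ κ(u)` is injective. -/
lemma key_inj {A : Type} [CommRing A] [IsDomain A]
    {M : Type*} [AddCommGroup M] [Module A M] (C : Submodule A M)
    (u : PrimeSpectrum A) (hu : u ∈ Module.freeLocus A (M ⧸ C)) :
    Function.Injective
      (LinearMap.rTensor (FractionRing (A ⧸ u.asIdeal)) C.subtype) := by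
  set p : Ideal A := u.asIdeal with hp
  haveI : p.IsPrime := u.isPrime
  set L : Type := FractionRing (A ⧸ p) with hL
  set S : Type := Localization.AtPrime p with hS
  -- L is an S-algebra
  have hunit : ∀ s : p.primeCompl, IsUnit (algebraMap A L s) := by
    rintro ⟨s, hs⟩
    have h0 : (Ideal.Quotient.mk p) s ≠ 0 := by
      simpa [Ideal.Quotient.eq_zero_iff_mem] using hs
    have : algebraMap A L s = algebraMap (A ⧸ p) L ((Ideal.Quotient.mk p) s) := by
      rw [IsScalarTower.algebraMap_apply A (A ⧸ p) L]
      rfl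
    rw [this, isUnit_iff_ne_zero]
    exact fun h => h0 (IsFractionRing.injective (A ⧸ p) L (by simpa using h))
  letI : Algebra S L := (IsLocalization.lift (S := S) (M := p.primeCompl) hunit).toAlgebra
  haveI : IsScalarTower A S L :=
    IsScalarTower.of_algebraMap_eq' (IsLocalization.lift_comp hunit).symm
  haveI free : Module.Free S (S ⊗[A] (M ⧸ C)) :=
    (Module.mem_freeLocus_iff_tensor u S).mp hu
  set ι : C →ₗ[A] M := C.subtype
  set π : M →ₗ[A] (M ⧸ C) := C.mkQ
  set ι' : (S ⊗[A] C) →ₗ[S] (S ⊗[A] M) := ι.baseChange S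
  set π' : (S ⊗[A] M) →ₗ[S] (S ⊗[A] (M ⧸ C)) := π.baseChange S
  have hι' : Function.Injective ι' := by
    rw [show (⇑ι' = ⇑(LinearMap.lTensor S ι)) from LinearMap.baseChange_eq_ltensor ι]
    exact Module.Flat.lTensor_preserves_injective_linearMap ι C.injective_subtype
  have hexc : Function.Exact ι π :=
    LinearMap.exact_iff.mpr (by rw [Submodule.ker_mkQ, Submodule.range_subtype])
  have hπs : Function.Surjective π := Submodule.mkQ_surjective C
  have hexc' : Function.Exact ι' π' := by
    rw [show (⇑ι' = ⇑(LinearMap.lTensor S ι)) from LinearMap.baseChange_eq_ltensor ι,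
      show (⇑π' = ⇑(LinearMap.lTensor S π)) from LinearMap.baseChange_eq_ltensor π]
    exact lTensor_exact S hexc hπs
  have hπ's : Function.Surjective π' := by
    rw [show (⇑π' = ⇑(LinearMap.lTensor S π)) from LinearMap.baseChange_eq_ltensor π]
    exact LinearMap.lTensor_surjective S hπs
  obtain ⟨σ, hσ⟩ := Module.projective_lifting_property π' LinearMap.id hπ's
  set δ : (S ⊗[A] M) →ₗ[S] (S ⊗[A] M) :=
    (LinearMap.id : (S ⊗[A] M) →ₗ[S] (S ⊗[A] M)) - σ ∘ₗ π' with hδ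
  have hmem : ∀ m, δ m ∈ LinearMap.range ι' := by
    intro m
    have : π' (δ m) = 0 := by
      have := DFunLike.congr_fun hσ (π' m)
      simp only [LinearMap.coe_comp, Function.comp_apply, LinearMap.id_coe, id_eq] at this
      simp only [hδ, LinearMap.sub_apply, LinearMap.id_apply, LinearMap.coe_comp,
        Function.comp_apply, map_sub, this, sub_self]
    exact (hexc' _).mp this
  set e := LinearEquiv.ofInjective ι' hι'
  set ρ : (S ⊗[A] M) →ₗ[S] (S ⊗[A] C) :=
    e.symm.toLinearMap ∘ₗ δ.codRestrict (LinearMap.range ι') hmem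
  have hρ0 : ∀ z, ρ (ι' z) = z := by
    intro z
    have h0 : π' (ι' z) = 0 := hexc'.apply_apply_eq_zero z
    have h1 : (δ.codRestrict (LinearMap.range ι') hmem) (ι' z) = e z := by
      apply Subtype.ext
      simp only [LinearMap.codRestrict_apply, hδ, LinearMap.sub_apply, LinearMap.id_apply,
        LinearMap.coe_comp, Function.comp_apply, h0, map_zero, sub_zero]
      exact (LinearEquiv.ofInjective_apply ι' z).symm
    show e.symm ((δ.codRestrict (LinearMap.range ι') hmem) (ι' z)) = z
    rw [h1, LinearEquiv.symm_apply_apply]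
  have hρ : ρ ∘ₗ ι' = LinearMap.id := LinearMap.ext hρ0
  have hιL : Function.Injective (LinearMap.lTensor (R := S) (M := L) ι') := by
    have hcomp : (LinearMap.lTensor (R := S) (M := L) ρ) ∘ₗ
        (LinearMap.lTensor (R := S) (M := L) ι') = LinearMap.id := by
      rw [← LinearMap.lTensor_comp, hρ, LinearMap.lTensor_id]
    exact Function.LeftInverse.injective
      (g := LinearMap.lTensor (R := S) (M := L) ρ)
      (fun z => DFunLike.congr_fun hcomp z)
  -- transport along canonical isomorphisms
  set EC := TensorProduct.AlgebraTensorModule.cancelBaseChange A S S L C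
  set EM := TensorProduct.AlgebraTensorModule.cancelBaseChange A S S L M
  have key : ∀ z : C ⊗[A] L,
      LinearMap.rTensor L ι z =
        (TensorProduct.comm A M L).symm (EM (LinearMap.lTensor (R := S) (M := L) ι'
          (EC.symm (TensorProduct.comm A C L z)))) := by
    intro z
    induction z using TensorProduct.induction_on with
    | zero => simp
    | tmul x l =>
        rw [LinearMap.rTensor_tmul, TensorProduct.comm_tmul,
          TensorProduct.AlgebraTensorModule.cancelBaseChange_symm_tmul,
          LinearMap.lTensor_tmul, LinearMap.baseChange_tmul,
          TensorProduct.AlgebraTensorModule.cancelBaseChange_tmul, one_smul,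
          TensorProduct.comm_symm_tmul]
    | add a b ha hb => simp [map_add, ha, hb]
  rw [show ⇑(LinearMap.rTensor L C.subtype) = _ from funext key]
  exact ((TensorProduct.comm A M L).symm.injective.comp (EM.injective.comp
    (hιL.comp (EC.symm.injective.comp (TensorProduct.comm A C L).injective))) :)

set_option maxHeartbeats 1000000 in
theorem statement_9 {A : Type} [CommRing A] [IsNoetherianRing A] [IsDomain A]
    (H₁ H₂ H₃ H₄ : ModuleCat A ⥤ ModuleCat A)
    [H₁.Additive] [H₁.Linear A] [H₂.Additive] [H₂.Linear A]
    [H₃.Additive] [H₃.Linear A] [H₄.Additive] [H₄.Linear A]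
    [PreservesFilteredColimits H₁] [PreservesFilteredColimits H₂]
    [PreservesFilteredColimits H₃] [PreservesFilteredColimits H₄]
    (α : H₁ ⟶ H₂) (β : H₂ ⟶ H₃) (γ : H₃ ⟶ H₄)
    (hexact : ∀ M : ModuleCat A,
      Function.Exact (α.app M) (β.app M) ∧ Function.Exact (β.app M) (γ.app M))
    (h1 : IsGS H₁) (h3 : IsGS H₃) (h4 : IsGI H₄)
    (h4wb : ∀ p : Ideal A, p.IsPrime →
      Module.Finite A (H₄.obj (ModuleCat.of A (A ⧸ p)))) :
    IsGS H₂ := by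
  obtain ⟨U₁, oU₁, dU₁, hU₁⟩ := h1
  obtain ⟨U₃, oU₃, dU₃, hU₃⟩ := h3
  obtain ⟨U₄, oU₄, dU₄, hU₄⟩ := h4
  have hbp : ((⊥ : Ideal A)).IsPrime := Ideal.bot_prime
  haveI h4fin' : Module.Finite A (H₄.obj (ModuleCat.of A (A ⧸ (⊥ : Ideal A)))) := h4wb ⊥ hbp
  let e0 : (A ⧸ (⊥ : Ideal A)) ≃ₗ[A] A := Submodule.quotEquivOfEqBot ⊥ rfl
  haveI h4fin : Module.Finite A (H₄.obj (ModuleCat.of A A)) :=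
    Module.Finite.equiv (H₄.mapIso e0.toModuleIso).toLinearEquiv
  let γA : (H₃.obj (ModuleCat.of A A)) →ₗ[A] (H₄.obj (ModuleCat.of A A)) :=
    (γ.app (ModuleCat.of A A)).hom
  let βA : (H₂.obj (ModuleCat.of A A)) →ₗ[A] (H₃.obj (ModuleCat.of A A)) :=
    (β.app (ModuleCat.of A A)).hom
  let αA : (H₁.obj (ModuleCat.of A A)) →ₗ[A] (H₂.obj (ModuleCat.of A A)) :=
    (α.app (ModuleCat.of A A)).hom
  set C : Submodule A (H₄.obj (ModuleCat.of A A)) := LinearMap.range γA with hC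
  haveI : Module.FinitePresentation A ((H₄.obj (ModuleCat.of A A)) ⧸ C) :=
    Module.finitePresentation_of_finite _ _
  set W := Module.freeLocus A ((H₄.obj (ModuleCat.of A A)) ⧸ C) with hW
  have oW : IsOpen W := Module.isOpen_freeLocus
  have hne : W.Nonempty := by
    refine ⟨⟨⊥, hbp⟩, ?_⟩
    have hsub : (⊥ : Ideal A).primeCompl = nonZeroDivisors A := by
      ext x
      simp only [Ideal.primeCompl, Submonoid.mem_mk, Subsemigroup.mem_mk, Set.mem_compl_iff,
        SetLike.mem_coe, Ideal.mem_bot, mem_nonZeroDivisors_iff_ne_zero]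
    haveI : IsLocalization.AtPrime (FractionRing A)
        (⟨⊥, hbp⟩ : PrimeSpectrum A).asIdeal := by
      show IsLocalization ((⊥ : Ideal A)).primeCompl (FractionRing A)
      rw [hsub]; infer_instance
    exact (Module.mem_freeLocus_iff_tensor (⟨⊥, hbp⟩ : PrimeSpectrum A)
      (FractionRing A)).mpr inferInstance
  have dW : Dense W := oW.dense hne
  refine ⟨U₁ ∩ (U₃ ∩ (U₄ ∩ W)), oU₁.inter (oU₃.inter (oU₄.inter oW)),
    dU₁.inter_of_isOpen_left (dU₃.inter_of_isOpen_left
      (dU₄.inter_of_isOpen_left dW oU₄) oU₃) oU₁, ?_⟩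
  rintro u ⟨hu1, hu3, hu4, huW⟩ hft
  set L : Type := FractionRing (A ⧸ u.asIdeal) with hLdef
  intro y
  -- pull back β y through H₃
  obtain ⟨x3, hx3⟩ := hU₃ u hu3 hft (β.app (ModuleCat.of A L) y)
  have h40 : natMap H₄ L (LinearMap.rTensor L γA x3) = 0 := by
    rw [← natMap_naturality γ L x3, hx3]
    exact (hexact (ModuleCat.of A L)).2.apply_apply_eq_zero y
  have h4z : LinearMap.rTensor L γA x3 = 0 := by
    apply hU₄ u hu4 hft
    rw [h40, map_zero]
  -- use the key injectivity to land in the image of β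
  have hfac : C.subtype ∘ₗ γA.rangeRestrict = γA := LinearMap.ext fun x => rfl
  have hrr0 : LinearMap.rTensor L γA.rangeRestrict x3 = 0 := by
    apply key_inj C u huW
    rw [map_zero, ← LinearMap.rTensor_comp_apply, hfac]
    exact h4z
  have hex : Function.Exact βA γA.rangeRestrict := by
    rw [LinearMap.exact_iff, LinearMap.ker_rangeRestrict]
    exact LinearMap.exact_iff.mp (hexact (ModuleCat.of A A)).2
  obtain ⟨x2, hx2⟩ := (rTensor_exact L hex γA.surjective_rangeRestrict x3).mp hrr0
  -- correct by an element coming from H₁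
  obtain ⟨z1, hz1⟩ := ((hexact (ModuleCat.of A L)).1 (natMap H₂ L x2 - y)).mp
    (by rw [map_sub, natMap_naturality β L x2, hx2, hx3, sub_self])
  obtain ⟨x1, hx1⟩ := hU₁ u hu1 hft z1
  refine ⟨x2 - LinearMap.rTensor L αA x1, ?_⟩
  have hkey : natMap H₂ L (LinearMap.rTensor L αA x1) = natMap H₂ L x2 - y := by
    rw [← natMap_naturality α L x1, hx1, hz1]
  rw [map_sub, hkey, sub_sub_cancel]
end

section
/- Let B' be a local artinian ring with residue field k_{B'}, and let K/k_{B'} be a finite (resp. finite separable) field extension. Then there exists a local artinian ring B̃' and a finite flat (resp. finite étale) ring extension B' → B̃' such that the residue field of B̃' equals K. -/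
/-!
Statement 14: Let `B'` be a local artinian ring with residue field `k` and `K/k` a
finite (resp. finite separable) field extension.  Then there exists a local artinian
ring `B̃'` and a finite flat (resp. finite étale) extension `B' → B̃'` whose residue
field equals `K` (compatibly with `k → K`).
-/

open IsLocalRing

/-- A finite flat local artinian extension of `B'` realizing the residue field
extension `K` of `ResidueField B'`. -/
structure FiniteFlatResidueLift (B' : Type) [CommRing B'] [IsLocalRing B']
    [IsArtinianRing B'] (K : Type) [Field K] [Algebra (ResidueField B') K] where
  C : Type
  [commRing : CommRing C]
  [alg : Algebra B' C]
  [isLocal : IsLocalRing C]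
  [isArtinian : IsArtinianRing C]
  [finite : Module.Finite B' C]
  [flat : Module.Flat B' C]
  [localHom : IsLocalHom (algebraMap B' C)]
  residue_eq : ∃ e : ResidueField C ≃+* K,
    (e : ResidueField C →+* K).comp (ResidueField.map (algebraMap B' C)) =
      algebraMap (ResidueField B') K

/-- A finite étale such extension: additionally formally unramified. -/
structure FiniteEtaleResidueLift (B' : Type) [CommRing B'] [IsLocalRing B']
    [IsArtinianRing B'] (K : Type) [Field K] [Algebra (ResidueField B') K]
    extends FiniteFlatResidueLift B' K where
  unramified : Algebra.FormallyUnramified B' C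

section Helpers

private lemma isUnit_of_map_ne_zero' {C L : Type*} [CommRing C] [Field L] (φ : C →+* L)
    (hs : Function.Surjective φ) (hn : ∀ x ∈ RingHom.ker φ, IsNilpotent x)
    {a : C} (h : φ a ≠ 0) : IsUnit a := by
  obtain ⟨b, hb⟩ := hs (φ a)⁻¹
  have hker : a * b - 1 ∈ RingHom.ker φ := by
    simp [RingHom.mem_ker, map_mul, hb, mul_inv_cancel₀ h]
  have h1 : IsUnit (a * b - 1 + 1) := (hn _ hker).isUnit_add_one
  rw [sub_add_cancel] at h1
  exact isUnit_of_mul_isUnit_left h1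

private lemma isLocalRing_of_surj' {C L : Type*} [CommRing C] [Field L] (φ : C →+* L)
    (hs : Function.Surjective φ) (hn : ∀ x ∈ RingHom.ker φ, IsNilpotent x) :
    IsLocalRing C := by
  haveI : Nontrivial C := φ.domain_nontrivial
  apply IsLocalRing.of_isUnit_or_isUnit_one_sub_self
  intro a
  rcases eq_or_ne (φ a) 0 with h | h
  · refine Or.inr (isUnit_of_map_ne_zero' φ hs hn ?_)
    simp [h]
  · exact Or.inl (isUnit_of_map_ne_zero' φ hs hn h)

open Polynomial in
/-- The single-step construction: adjoin a root of a monic lift of the minimal polynomial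
of a generator `α` of `L` over the residue field. -/
private lemma step (B' : Type) [CommRing B'] [IsLocalRing B'] [IsArtinianRing B']
    (L : Type) [Field L] [Algebra (ResidueField B') L] (α : L)
    (hint : IsIntegral (ResidueField B') α)
    (hgen : Algebra.adjoin (ResidueField B') ({α} : Set L) = ⊤) :
    Nonempty (FiniteFlatResidueLift B' L) ∧
      ((minpoly (ResidueField B') α).Separable → Nonempty (FiniteEtaleResidueLift B' L)) := by
  classical
  have hmono : (minpoly (ResidueField B') α).Monic := minpoly.monic hint
  obtain ⟨q, hq, _, hqm⟩ := Polynomial.lifts_and_degree_eq_and_monic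
    ((Polynomial.mem_lifts _).2 ((Polynomial.map_surjective _
      IsLocalRing.residue_surjective) (minpoly (ResidueField B') α))) hmono
  have hroot : Polynomial.eval₂ ((algebraMap (ResidueField B') L).comp (residue B')) α q = 0 := by
    rw [← Polynomial.eval₂_map, hq, ← Polynomial.aeval_def, minpoly.aeval]
  set φ : AdjoinRoot q →+* L :=
    AdjoinRoot.lift ((algebraMap (ResidueField B') L).comp (residue B')) α hroot with hφdef
  have hφ_of : ∀ b : B', φ (AdjoinRoot.of q b) = algebraMap (ResidueField B') L (residue B' b) :=
    fun b => AdjoinRoot.lift_of hroot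
  have hφ_root : φ (AdjoinRoot.root q) = α := AdjoinRoot.lift_root hroot
  -- surjectivity
  have hsurj : Function.Surjective φ := by
    let S : Subalgebra (ResidueField B') L :=
      { φ.rangeS with
        algebraMap_mem' := fun c => by
          obtain ⟨b, rfl⟩ := IsLocalRing.residue_surjective c
          exact ⟨AdjoinRoot.of q b, hφ_of b⟩ }
    have htop : S = ⊤ := by
      rw [eq_top_iff, ← hgen]
      apply Algebra.adjoin_le
      rintro x rfl
      exact ⟨AdjoinRoot.root q, hφ_root⟩
    intro y
    have hy : y ∈ S := htop.symm ▸ trivial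
    exact hy
  -- kernel computation
  have hker : RingHom.ker φ = (maximalIdeal B').map (AdjoinRoot.of q) := by
    have hirr : Irreducible (q.map (residue B')) := by
      rw [hq]; exact minpoly.irreducible hint
    haveI : Fact (Irreducible (q.map (residue B'))) := ⟨hirr⟩
    have hroot2 : Polynomial.eval₂ (algebraMap (ResidueField B') L) α (q.map (residue B')) = 0 := by
      rw [hq, ← Polynomial.aeval_def, minpoly.aeval]
    set ψ : AdjoinRoot (q.map (residue B')) →+* L :=
      AdjoinRoot.lift (algebraMap (ResidueField B') L) α hroot2 with hψdef
    set E := AdjoinRoot.quotAdjoinRootEquivQuotPolynomialQuot (maximalIdeal B') q with hEdef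
    have key : ∀ P : B'[X],
        ψ (E (Ideal.Quotient.mk _ (AdjoinRoot.mk q P))) = φ (AdjoinRoot.mk q P) := by
      intro P
      have h1 : E (Ideal.Quotient.mk _ (AdjoinRoot.mk q P)) =
          AdjoinRoot.mk (q.map (residue B')) (P.map (residue B')) := rfl
      rw [h1, hψdef, hφdef, AdjoinRoot.lift_mk, AdjoinRoot.lift_mk, Polynomial.eval₂_map]
    apply le_antisymm
    · intro x hx
      obtain ⟨P, rfl⟩ := AdjoinRoot.mk_surjective x
      have h0 : φ (AdjoinRoot.mk q P) = 0 := hx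
      have h2 : E (Ideal.Quotient.mk _ (AdjoinRoot.mk q P)) = 0 := by
        apply ψ.injective
        rw [key P, h0]
        exact (map_zero ψ).symm
      have h3 : (Ideal.Quotient.mk ((maximalIdeal B').map (AdjoinRoot.of q))
          (AdjoinRoot.mk q P)) = 0 := by
        apply E.injective
        rw [h2, map_zero]
      exact Ideal.Quotient.eq_zero_iff_mem.1 h3
    · rw [Ideal.map_le_iff_le_comap]
      intro b hb
      have : residue B' b = 0 := Ideal.Quotient.eq_zero_iff_mem.2 hb
      simp [RingHom.mem_ker, hφ_of b, this]
  -- nilpotency of the kernel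
  obtain ⟨n, hn⟩ : IsNilpotent (maximalIdeal B') := by
    rw [← IsLocalRing.jacobson_eq_maximalIdeal (⊥ : Ideal B') bot_ne_top]
    exact IsArtinianRing.isNilpotent_jacobson_bot
  have hnil : ∀ x ∈ RingHom.ker φ, IsNilpotent x := by
    intro x hx
    refine ⟨n, ?_⟩
    have hxn : x ^ n ∈ (RingHom.ker φ) ^ n := Ideal.pow_mem_pow hx n
    rw [hker, ← Ideal.map_pow, hn, Submodule.zero_eq_bot, Ideal.map_bot] at hxn
    simpa using hxn
  -- local ring structure
  haveI hCloc : IsLocalRing (AdjoinRoot q) := isLocalRing_of_surj' φ hsurj hnil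
  have hmax : RingHom.ker φ = maximalIdeal (AdjoinRoot q) :=
    IsLocalRing.eq_maximalIdeal (RingHom.ker_isMaximal_of_surjective φ hsurj)
  let e : ResidueField (AdjoinRoot q) ≃+* L :=
    (Ideal.quotEquivOfEq hmax.symm).trans (RingHom.quotientKerEquivOfSurjective hsurj)
  have he : ∀ x : AdjoinRoot q, e (residue _ x) = φ x := fun x => rfl
  -- module structure
  letI : Module.Free B' (AdjoinRoot q) := Module.Free.of_basis (AdjoinRoot.powerBasis' hqm).basis
  haveI : Module.Finite B' (AdjoinRoot q) :=
    Module.Finite.of_basis (AdjoinRoot.powerBasis' hqm).basis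
  haveI : IsArtinianRing (AdjoinRoot q) := isArtinian_of_tower B' inferInstance
  haveI : IsLocalHom (algebraMap B' (AdjoinRoot q)) := by
    constructor
    intro a ha
    by_contra hna
    have hmem : a ∈ maximalIdeal B' := by
      rwa [IsLocalRing.mem_maximalIdeal, mem_nonunits_iff]
    have h0 : residue B' a = 0 := Ideal.Quotient.eq_zero_iff_mem.2 hmem
    have hu := ha.map φ
    rw [AdjoinRoot.algebraMap_eq, hφ_of, h0, map_zero] at hu
    exact not_isUnit_zero hu
  have hcompat : (e : ResidueField (AdjoinRoot q) →+* L).comp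
      (ResidueField.map (algebraMap B' (AdjoinRoot q))) = algebraMap (ResidueField B') L := by
    refine RingHom.ext fun y => ?_
    obtain ⟨b, rfl⟩ := IsLocalRing.residue_surjective y
    rw [RingHom.comp_apply, IsLocalRing.ResidueField.map_residue]
    show e (residue _ (algebraMap B' (AdjoinRoot q) b)) = _
    rw [he, AdjoinRoot.algebraMap_eq, hφ_of]
  let l : FiniteFlatResidueLift B' L :=
    { C := AdjoinRoot q
      residue_eq := ⟨e, hcompat⟩ }
  refine ⟨⟨l⟩, fun hsep => ⟨{ toFiniteFlatResidueLift := l, unramified := ?_ }⟩⟩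
  -- unramifiedness
  have hu : IsUnit (Polynomial.aeval (AdjoinRoot.root q) (Polynomial.derivative q)) := by
    have hφu : φ (Polynomial.aeval (AdjoinRoot.root q) (Polynomial.derivative q)) ≠ 0 := by
      rw [AdjoinRoot.aeval_eq, AdjoinRoot.lift_mk, ← Polynomial.eval₂_map,
        ← Polynomial.derivative_map, hq, ← Polynomial.aeval_def]
      exact hsep.aeval_derivative_ne_zero (minpoly.aeval _ α)
    by_contra hnu
    have hmem : Polynomial.aeval (AdjoinRoot.root q) (Polynomial.derivative q) ∈
        maximalIdeal (AdjoinRoot q) := by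
      rwa [IsLocalRing.mem_maximalIdeal, mem_nonunits_iff]
    rw [← hmax] at hmem
    exact hφu hmem
  have hD : (KaehlerDifferential.D B' (AdjoinRoot q)) (AdjoinRoot.root q) = 0 := by
    have h0 := (KaehlerDifferential.D B' (AdjoinRoot q)).map_aeval q (AdjoinRoot.root q)
    rw [AdjoinRoot.aeval_eq, AdjoinRoot.mk_self, map_zero] at h0
    have h2 : ((hu.unit⁻¹ : (AdjoinRoot q)ˣ) : AdjoinRoot q) •
        ((Polynomial.aeval (AdjoinRoot.root q) (Polynomial.derivative q)) •
          (KaehlerDifferential.D B' (AdjoinRoot q)) (AdjoinRoot.root q)) = 0 := by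
      rw [← h0, smul_zero]
    rwa [smul_smul, IsUnit.val_inv_mul, one_smul] at h2
  have hall : ∀ x : AdjoinRoot q, (KaehlerDifferential.D B' (AdjoinRoot q)) x = 0 := by
    intro x
    have hx : x ∈ Algebra.adjoin B' ({AdjoinRoot.root q} : Set (AdjoinRoot q)) := by
      rw [AdjoinRoot.adjoinRoot_eq_top]; trivial
    have heq : Set.EqOn (KaehlerDifferential.D B' (AdjoinRoot q))
        (0 : Derivation B' (AdjoinRoot q) _)
        (Algebra.adjoin B' ({AdjoinRoot.root q} : Set (AdjoinRoot q))) := by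
      apply Derivation.eqOn_adjoin
      rintro y rfl
      simpa using hD
    simpa using heq hx
  refine ⟨?_⟩
  have hspan := KaehlerDifferential.span_range_derivation B' (AdjoinRoot q)
  have hbot : (⊤ : Submodule (AdjoinRoot q)
      (Ω[(AdjoinRoot q)⁄B'])) = ⊥ := by
    rw [← hspan]
    refine le_antisymm ?_ bot_le
    rw [Submodule.span_le]
    rintro _ ⟨x, rfl⟩
    simp [hall x]
  constructor
  intro a b
  have ha : a ∈ (⊥ : Submodule (AdjoinRoot q) (Ω[(AdjoinRoot q)⁄B'])) :=
    hbot ▸ Submodule.mem_top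
  have hb : b ∈ (⊥ : Submodule (AdjoinRoot q) (Ω[(AdjoinRoot q)⁄B'])) :=
    hbot ▸ Submodule.mem_top
  rw [Submodule.mem_bot] at ha hb
  rw [ha, hb]

open scoped IntermediateField in
private lemma flat_lift (n : ℕ) :
    ∀ (B' : Type) [CommRing B'] [IsLocalRing B'] [IsArtinianRing B']
      (K : Type) [Field K] [Algebra (ResidueField B') K]
      [FiniteDimensional (ResidueField B') K],
      Module.finrank (ResidueField B') K ≤ n → Nonempty (FiniteFlatResidueLift B' K) := by
  induction n with
  | zero =>
    intro B' _ _ _ K _ _ _ hle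
    have := Module.finrank_pos (R := ResidueField B') (M := K)
    omega
  | succ n ih =>
    intro B' _ _ _ K _ _ _ hle
    by_cases hsurj : Function.Surjective (algebraMap (ResidueField B') K)
    · -- the trivial lift `C = B'`
      haveI : IsLocalHom (algebraMap B' B') := ⟨fun a h => h⟩
      refine ⟨{ C := B', residue_eq := ?_ }⟩
      refine ⟨RingEquiv.ofBijective (algebraMap (ResidueField B') K)
        ⟨(algebraMap (ResidueField B') K).injective, hsurj⟩, ?_⟩
      refine RingHom.ext fun y => ?_
      obtain ⟨b, rfl⟩ := IsLocalRing.residue_surjective y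
      rw [RingHom.comp_apply, IsLocalRing.ResidueField.map_residue]
      rfl
    · -- pick `α` outside the image, adjoin a lift of it, and recurse
      have hex : ∃ α : K, α ∉ Set.range (algebraMap (ResidueField B') K) := by
        by_contra hc
        push_neg at hc
        exact hsurj fun y => hc y
      obtain ⟨α, hα⟩ := hex
      have hint : IsIntegral (ResidueField B') α := IsIntegral.of_finite _ α
      haveI : FiniteDimensional (ResidueField B') (ResidueField B')⟮α⟯ :=
        IntermediateField.adjoin.finiteDimensional hint
      have hgenint : IsIntegral (ResidueField B')
          (IntermediateField.AdjoinSimple.gen (ResidueField B') α) :=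
        IsIntegral.of_finite _ _
      have hgen : Algebra.adjoin (ResidueField B')
          ({IntermediateField.AdjoinSimple.gen (ResidueField B') α} :
            Set (ResidueField B')⟮α⟯) = ⊤ := by
        have h := (IntermediateField.adjoin.powerBasis hint).adjoin_gen_eq_top
        rwa [IntermediateField.adjoin.powerBasis_gen] at h
      obtain ⟨⟨l₁⟩, -⟩ := step B' ((ResidueField B')⟮α⟯)
        (IntermediateField.AdjoinSimple.gen (ResidueField B') α) hgenint hgen
      letI := l₁.commRing
      letI := l₁.alg
      haveI := l₁.isLocal
      haveI := l₁.isArtinian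
      haveI := l₁.finite
      haveI := l₁.flat
      haveI := l₁.localHom
      obtain ⟨e₁, he₁⟩ := l₁.residue_eq
      letI : Algebra (ResidueField l₁.C) K :=
        ((algebraMap ((ResidueField B')⟮α⟯) K).comp
          (e₁ : ResidueField l₁.C →+* (ResidueField B')⟮α⟯)).toAlgebra
      haveI : FiniteDimensional ((ResidueField B')⟮α⟯) K :=
        FiniteDimensional.right (ResidueField B') _ K
      have halg : (algebraMap (ResidueField l₁.C) K) =
          (algebraMap ((ResidueField B')⟮α⟯) K).comp
            (e₁ : ResidueField l₁.C →+* (ResidueField B')⟮α⟯) := rfl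
      haveI : Module.Finite (ResidueField l₁.C) K := by
        refine Module.Finite.of_equiv_equiv (e₁.symm) (RingEquiv.refl K) ?_
        refine RingHom.ext fun x => ?_
        simp [halg]
      -- finrank bound
      have hrank : Module.rank ((ResidueField B')⟮α⟯) K = Module.rank (ResidueField l₁.C) K := by
        refine rank_eq_of_equiv_equiv (R := (ResidueField B')⟮α⟯) (R' := ResidueField l₁.C)
          (M := K) (M₁ := K)
          (e₁.symm : (ResidueField B')⟮α⟯ → ResidueField l₁.C)
          (AddEquiv.refl K) e₁.symm.bijective ?_
        intro r m
        show r • m = e₁.symm r • m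
        rw [Algebra.smul_def, Algebra.smul_def, halg]
        simp
      have hfr : Module.finrank ((ResidueField B')⟮α⟯) K = Module.finrank (ResidueField l₁.C) K :=
        congrArg Cardinal.toNat hrank
      have hmul : Module.finrank (ResidueField B') ((ResidueField B')⟮α⟯) *
          Module.finrank ((ResidueField B')⟮α⟯) K = Module.finrank (ResidueField B') K :=
        Module.finrank_mul_finrank _ _ _
      have hne1 : Module.finrank (ResidueField B') ((ResidueField B')⟮α⟯) ≠ 1 := by
        intro h1
        have hbot : (ResidueField B')⟮α⟯ = ⊥ := IntermediateField.finrank_eq_one_iff.1 h1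
        have : α ∈ (⊥ : IntermediateField (ResidueField B') K) := by
          rw [← hbot]
          exact IntermediateField.mem_adjoin_simple_self _ α
        rw [IntermediateField.mem_bot] at this
        exact hα this
      have hpos1 : 0 < Module.finrank (ResidueField B') ((ResidueField B')⟮α⟯) :=
        Module.finrank_pos
      have hpos2 : 0 < Module.finrank ((ResidueField B')⟮α⟯) K := Module.finrank_pos
      have hle2 : Module.finrank (ResidueField l₁.C) K ≤ n := by
        rw [← hfr]
        have h2 : 2 ≤ Module.finrank (ResidueField B') ((ResidueField B')⟮α⟯) := by omega
        have h3 : 2 * Module.finrank ((ResidueField B')⟮α⟯) K ≤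
            Module.finrank (ResidueField B') K := by
          rw [← hmul]
          exact Nat.mul_le_mul_right _ h2
        omega
      obtain ⟨l₂⟩ := ih l₁.C K hle2
      letI := l₂.commRing
      letI := l₂.alg
      haveI := l₂.isLocal
      haveI := l₂.isArtinian
      haveI := l₂.finite
      haveI := l₂.flat
      haveI := l₂.localHom
      obtain ⟨e₂, he₂⟩ := l₂.residue_eq
      letI : Algebra B' l₂.C := ((algebraMap l₁.C l₂.C).comp (algebraMap B' l₁.C)).toAlgebra
      have halg2 : algebraMap B' l₂.C = (algebraMap l₁.C l₂.C).comp (algebraMap B' l₁.C) := rfl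
      haveI : IsScalarTower B' l₁.C l₂.C := IsScalarTower.of_algebraMap_eq' halg2
      haveI : Module.Finite B' l₂.C := Module.Finite.trans l₁.C l₂.C
      haveI : Module.Flat B' l₂.C := Module.Flat.trans B' l₁.C l₂.C
      haveI : IsLocalHom (algebraMap B' l₂.C) := by
        constructor
        intro a ha
        have h2 : IsUnit (algebraMap l₁.C l₂.C (algebraMap B' l₁.C a)) := ha
        exact IsLocalHom.map_nonunit a (IsLocalHom.map_nonunit _ h2)
      refine ⟨{ C := l₂.C, residue_eq := ⟨e₂, ?_⟩ }⟩
      refine RingHom.ext fun y => ?_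
      obtain ⟨c, rfl⟩ := IsLocalRing.residue_surjective y
      rw [RingHom.comp_apply, IsLocalRing.ResidueField.map_residue]
      have s1 : algebraMap B' l₂.C c = algebraMap l₁.C l₂.C (algebraMap B' l₁.C c) := rfl
      rw [s1, ← IsLocalRing.ResidueField.map_residue (algebraMap l₁.C l₂.C)]
      have t2 := RingHom.congr_fun he₂ (residue l₁.C (algebraMap B' l₁.C c))
      rw [RingHom.comp_apply] at t2
      rw [t2, halg, RingHom.comp_apply,
        ← IsLocalRing.ResidueField.map_residue (algebraMap B' l₁.C)]
      have t1 := RingHom.congr_fun he₁ (residue B' c)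
      rw [RingHom.comp_apply] at t1
      rw [t1]
      exact (IsScalarTower.algebraMap_apply (ResidueField B') ((ResidueField B')⟮α⟯) K
        (residue B' c)).symm

theorem statement_14 (B' : Type) [CommRing B'] [IsLocalRing B'] [IsArtinianRing B']
    (K : Type) [Field K] [Algebra (ResidueField B') K]
    [FiniteDimensional (ResidueField B') K] :
    Nonempty (FiniteFlatResidueLift B' K) ∧
      (Algebra.IsSeparable (ResidueField B') K →
        Nonempty (FiniteEtaleResidueLift B' K)) := by
  constructor
  · exact flat_lift (Module.finrank (ResidueField B') K) B' K le_rfl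
  · intro hsep
    haveI := hsep
    obtain ⟨α, hα⟩ := Field.exists_primitive_element (ResidueField B') K
    have hint : IsIntegral (ResidueField B') α := IsIntegral.of_finite _ α
    have hgen : Algebra.adjoin (ResidueField B') ({α} : Set K) = ⊤ := by
      rw [← IntermediateField.adjoin_simple_toSubalgebra_of_isAlgebraic hint.isAlgebraic, hα]
      rfl
    have hs : (minpoly (ResidueField B') α).Separable := Algebra.IsSeparable.isSeparable _ α
    exact (step B' K α hint hgen).2 hs
end Helpers
end

section
/- Let S be a Jacobson scheme and T an S-scheme locally of finite type. Then T is Jacobson, and every point t ∈ |T| of finite type (i.e., such that Spec κ(t) → T is of finite type) is a closed point of T. Conversely, in any scheme locally of finite type over a Jacobson scheme, the finite type points are exactly the closed points and they are dense in every closed subset. -/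
/-!
Statement 16: Let `S` be a Jacobson scheme and `T` an `S`-scheme locally of finite type.
Then `T` is Jacobson, the finite type points of `T` (those `t` with
`Spec κ(t) → T` locally of finite type) are exactly the closed points, and the closed
points are dense in every closed subset.
-/

open CategoryTheory AlgebraicGeometry TopologicalSpace

lemma aux16_isJacobsonRing_of_jacobsonSpace {X : Scheme} [JacobsonSpace X] {U : X.Opens}
    (hU : IsAffineOpen U) : IsJacobsonRing Γ(X, U) := by
  have h1 : JacobsonSpace ↥U :=
    .of_isOpenEmbedding U.isOpen.isOpenEmbedding_subtypeVal
  haveI h1' : JacobsonSpace ↑↑(U.toScheme).toPresheafedSpace := h1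
  have h2 : JacobsonSpace ↑↑(Spec Γ(X, U)).toPresheafedSpace :=
    .of_isClosedEmbedding (Scheme.homeoOfIso hU.isoSpec).symm.isClosedEmbedding
  exact PrimeSpectrum.isJacobsonRing_iff_jacobsonSpace.mpr h2

lemma aux16_jacobsonSpace_of_isJacobsonRing {X : Scheme} {U : X.Opens}
    (hU : IsAffineOpen U) (h : IsJacobsonRing Γ(X, U)) : JacobsonSpace ↥U := by
  haveI : JacobsonSpace ↑↑(Spec Γ(X, U)).toPresheafedSpace :=
    (inferInstance : JacobsonSpace (PrimeSpectrum Γ(X, U)))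
  have h2 : JacobsonSpace ↑↑(U.toScheme).toPresheafedSpace :=
    .of_isClosedEmbedding (Scheme.homeoOfIso hU.isoSpec).isClosedEmbedding
  exact h2

lemma aux16_jacobson {S T : Scheme} (f : T ⟶ S) [LocallyOfFiniteType f]
    [JacobsonSpace S] : JacobsonSpace T := by
  have H : ∀ t : T, ∃ V : T.Opens, IsAffineOpen V ∧ t ∈ V ∧ JacobsonSpace ↥V := by
    intro t
    obtain ⟨_, ⟨U, hU, rfl⟩, hfU, -⟩ :=
      S.isBasis_affineOpens.exists_subset_of_mem_open (Set.mem_univ (f.base t)) isOpen_univ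
    obtain ⟨_, ⟨V, hV, rfl⟩, htV, hVU⟩ :=
      T.isBasis_affineOpens.exists_subset_of_mem_open
        (show t ∈ (f ⁻¹ᵁ U : Set T) from hfU) (f ⁻¹ᵁ U).isOpen
    have hle : V ≤ f ⁻¹ᵁ U := hVU
    have hft := HasRingHomProperty.appLE (P := @LocallyOfFiniteType) f ‹_› ⟨U, hU⟩ ⟨V, hV⟩ hle
    have hjacU : IsJacobsonRing Γ(S, U) := aux16_isJacobsonRing_of_jacobsonSpace hU
    have hjacV : IsJacobsonRing Γ(T, V) := hft.isJacobsonRing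
    exact ⟨V, hV, htV, aux16_jacobsonSpace_of_isJacobsonRing hV hjacV⟩
  choose V hV htV hJ using H
  rw [IsOpenCover.jacobsonSpace_iff (U := V) (show iSup V = ⊤ from ?_)]
  · exact hJ
  · rw [eq_top_iff]
    intro t _
    exact Opens.mem_iSup.mpr ⟨t, htV t⟩

lemma aux16_closed_of_finiteType {T : Scheme} [JacobsonSpace T] (t : T)
    (h : LocallyOfFiniteType (T.fromSpecResidueField t)) : IsClosed ({t} : Set T) := by
  obtain ⟨_, ⟨V, hV, rfl⟩, htV, -⟩ :=
    T.isBasis_affineOpens.exists_subset_of_mem_open (Set.mem_univ t) isOpen_univ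
  replace hV : IsAffineOpen V := hV
  set ι := Scheme.Opens.ι V with hιdef
  have hle : Set.range (T.fromSpecResidueField t).base ⊆ Set.range ι.base := by
    rw [Scheme.range_fromSpecResidueField, Scheme.Opens.range_ι]
    exact Set.singleton_subset_iff.mpr htV
  set g' := IsOpenImmersion.lift ι (T.fromSpecResidueField t) hle with hg'def
  have hfac : g' ≫ ι = T.fromSpecResidueField t := IsOpenImmersion.lift_fac _ _ hle
  have hcomp : LocallyOfFiniteType (g' ≫ ι) := hfac ▸ h
  have hg' : LocallyOfFiniteType g' := locallyOfFiniteType_of_comp g' ι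
  set g'' := g' ≫ hV.isoSpec.hom with hg''def
  have hg'' : LocallyOfFiniteType g'' := inferInstance
  set χ : Γ(T, V) ⟶ T.residueField t := Spec.preimage g'' with hχdef
  have hχ : Spec.map χ = g'' := Spec.map_preimage g''
  have hft : RingHom.FiniteType χ.hom := by
    rw [← HasRingHomProperty.Spec_iff (P := @LocallyOfFiniteType), hχ]
    exact hg''
  have hjac : IsJacobsonRing Γ(T, V) := aux16_isJacobsonRing_of_jacobsonSpace hV
  letI := χ.hom.toAlgebra
  have hftA : Algebra.FiniteType Γ(T, V) (T.residueField t) := hft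
  have hfin : Module.Finite Γ(T, V) (T.residueField t) :=
    finite_of_finite_type_of_isJacobsonRing _ _
  have hχfin : χ.hom.Finite := hfin
  have hint : χ.hom.IsIntegral := hχfin.to_isIntegral
  have hclosedmap : IsClosedMap (PrimeSpectrum.comap χ.hom) :=
    PrimeSpectrum.isClosedMap_comap_of_isIntegral _ hint
  have h1 : IsClosed (Set.range g''.base) := by
    have heq : Set.range g''.base = PrimeSpectrum.comap χ.hom '' Set.univ := by
      rw [Set.image_univ, ← hχ]
      rfl
    rw [heq]
    exact hclosedmap _ isClosed_univ
  have h2 : IsClosed (Set.range g'.base) := by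
    have heq : Set.range g''.base = (Scheme.homeoOfIso hV.isoSpec) '' Set.range g'.base := by
      rw [← Set.range_comp]
      rfl
    rw [heq, (Scheme.homeoOfIso hV.isoSpec).isClosed_image] at h1
    exact h1
  have h3 : ι.base '' Set.range g'.base = ({t} : Set T) := by
    rw [← Set.range_comp, ← TopCat.coe_comp, ← Scheme.Hom.comp_base, hfac,
      Scheme.range_fromSpecResidueField]
  have h4 : IsLocallyClosed ({t} : Set T) := by
    rw [← h3]
    exact h2.isLocallyClosed.image ι.isOpenEmbedding.isInducing
      ι.isOpenEmbedding.isOpen_range.isLocallyClosed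
  exact isClosed_singleton_of_isLocallyClosed_singleton h4

theorem statement_16 {S T : Scheme} (f : T ⟶ S) [LocallyOfFiniteType f]
    [JacobsonSpace S] :
    JacobsonSpace T ∧
    (∀ t : T, LocallyOfFiniteType (T.fromSpecResidueField t) ↔ IsClosed ({t} : Set T)) ∧
    (∀ Z : Set T, IsClosed Z → Z ⊆ closure {t ∈ Z | IsClosed ({t} : Set T)}) := by
  have hT : JacobsonSpace T := aux16_jacobson f
  refine ⟨hT, fun t ↦ ⟨aux16_closed_of_finiteType t, fun ht ↦ ?_⟩, fun Z hZ ↦ ?_⟩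
  · have : IsClosedImmersion (T.fromSpecResidueField t) :=
      IsClosedImmersion.of_isPreimmersion _
        (by rw [Scheme.range_fromSpecResidueField]; exact ht)
    infer_instance
  · have heq : {t ∈ Z | IsClosed ({t} : Set T)} = Z ∩ closedPoints T := rfl
    rw [heq, closure_inter_closedPoints hZ]
end

section
/- Let B = k[x], A = k[x, x⁻¹], and A' = k[x, x⁻¹, y]/(y²) over a field k, with the obvious maps B → A (localization) and A' → A (setting y = 0, a square-zero surjection). Then the fiber product ring B' = B ×_A A' is isomorphic to k[x, y, yx⁻¹, yx⁻², …]/(y, yx⁻¹, yx⁻², …)², and B' is not a finitely generated k-algebra. -/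
set_option synthInstance.maxHeartbeats 1000000
set_option maxHeartbeats 4000000

namespace St18

variable (k : Type) [Field k]

noncomputable abbrev AX (k : Type) [Field k] :=
  Localization.Away (Polynomial.X : Polynomial k)

/-- The algebra map `TrivSqZeroExt B A → B × TrivSqZeroExt A A`. -/
noncomputable def toB' :
    TrivSqZeroExt (Polynomial k) (AX k) →ₐ[k]
      (Polynomial k) × TrivSqZeroExt (AX k) (AX k) where
  toFun t := (t.fst, (algebraMap (Polynomial k) (AX k) t.fst, t.snd))
  map_one' := by ext <;> simp
  map_mul' t u := by
    ext <;>
      simp [TrivSqZeroExt.fst_mul, TrivSqZeroExt.snd_mul, Algebra.smul_def,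
        MulOpposite.op_smul, mul_comm]
    · rfl
    · rw [mul_comm u.snd]; rfl
  map_zero' := by ext <;> simp
  map_add' t u := by ext <;> simp <;> rfl
  commutes' r := by
    have : algebraMap k (AX k) r
        = algebraMap (Polynomial k) (AX k) (algebraMap k (Polynomial k) r) :=
      IsScalarTower.algebraMap_apply k (Polynomial k) (AX k) r
    ext <;> simp [TrivSqZeroExt.algebraMap_eq_inl', this]

/-- If `TrivSqZeroExt (Polynomial k) (AX k)` is of finite type over `k`, then
`AX k` is spanned over `Polynomial k` by a finite set. -/
theorem span_snd (hT : Algebra.FiniteType k (TrivSqZeroExt (Polynomial k) (AX k))) :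
    ∃ S : Set (AX k), S.Finite ∧ Submodule.span (Polynomial k) S = ⊤ := by
  obtain ⟨s, hs⟩ := hT.out
  set sS : Set (TrivSqZeroExt (Polynomial k) (AX k)) := ↑s with hsS
  set M : Submodule (Polynomial k) (AX k) :=
    Submodule.span (Polynomial k) (TrivSqZeroExt.snd '' sS) with hM
  refine ⟨TrivSqZeroExt.snd '' sS, s.finite_toSet.image _, ?_⟩
  have hSsub : ∃ S : Subalgebra k (TrivSqZeroExt (Polynomial k) (AX k)),
      (S : Set (TrivSqZeroExt (Polynomial k) (AX k)))
        = {t : TrivSqZeroExt (Polynomial k) (AX k) | t.snd ∈ M} := by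
    refine ⟨{ carrier := {t | t.snd ∈ M}
              mul_mem' := ?_
              add_mem' := ?_
              algebraMap_mem' := ?_ }, rfl⟩
    · intro a b ha hb
      simp only [Set.mem_setOf_eq, TrivSqZeroExt.snd_mul, op_smul_eq_smul] at *
      exact add_mem (M.smul_mem _ hb) (M.smul_mem _ ha)
    · intro a b ha hb
      simp only [Set.mem_setOf_eq, TrivSqZeroExt.snd_add] at *
      exact add_mem ha hb
    · intro r
      simp [TrivSqZeroExt.algebraMap_eq_inl', M.zero_mem]
  obtain ⟨S, hScarrier⟩ := hSsub
  have hle : Algebra.adjoin k sS ≤ S := by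
    apply Algebra.adjoin_le
    intro t ht
    show t ∈ (S : Set _)
    rw [hScarrier]
    exact Submodule.subset_span ⟨t, ht, rfl⟩
  rw [hs] at hle
  rw [← hM, eq_top_iff]
  intro m _
  have : (TrivSqZeroExt.inr m : TrivSqZeroExt (Polynomial k) (AX k)) ∈ (S : Set _) :=
    hle (by trivial)
  rw [hScarrier] at this
  simpa using this

theorem not_finiteType :
    ¬ Algebra.FiniteType k (TrivSqZeroExt (Polynomial k) (AX k)) := by
  intro hT
  obtain ⟨S, hSfin, hSspan⟩ := span_snd k hT
  set R : Submodule (Polynomial k) (AX k) :=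
    LinearMap.range (Algebra.linearMap (Polynomial k) (AX k)) with hR
  have hmono : ∀ (m : AX k) (n n' : ℕ), n ≤ n' →
      algebraMap (Polynomial k) (AX k) (Polynomial.X ^ n) * m ∈ R →
      algebraMap (Polynomial k) (AX k) (Polynomial.X ^ n') * m ∈ R := by
    intro m n n' hnn' hmem
    obtain ⟨c, hc⟩ := Nat.exists_eq_add_of_le hnn'
    have hX : (Polynomial.X : Polynomial k) ^ n' = Polynomial.X ^ c * Polynomial.X ^ n := by
      rw [hc, pow_add, mul_comm]
    rw [hX, map_mul, mul_assoc, ← Algebra.smul_def]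
    exact R.smul_mem _ hmem
  have hbound : ∀ m : AX k, ∃ n : ℕ,
      algebraMap (Polynomial k) (AX k) (Polynomial.X ^ n) * m ∈ R := by
    intro m
    obtain ⟨⟨p, d⟩, hd⟩ := IsLocalization.surj
      (Submonoid.powers (Polynomial.X : Polynomial k)) m
    obtain ⟨n, hn⟩ := d.2
    refine ⟨n, ?_⟩
    have hn' : (Polynomial.X : Polynomial k) ^ n = (d : Polynomial k) := hn
    rw [hn', mul_comm, hd]
    exact ⟨p, rfl⟩
  choose ν hν using hbound
  set N := hSfin.toFinset.sup ν with hN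
  have hall : ∀ m : AX k, algebraMap (Polynomial k) (AX k) (Polynomial.X ^ N) * m ∈ R := by
    have hsub : S ⊆ {m : AX k | algebraMap (Polynomial k) (AX k) (Polynomial.X ^ N) * m ∈ R} := by
      intro m hm
      exact hmono m (ν m) N (Finset.le_sup (hSfin.mem_toFinset.mpr hm)) (hν m)
    have hle : Submodule.span (Polynomial k) S ≤
        Submodule.comap
          (LinearMap.mulLeft (Polynomial k)
            (algebraMap (Polynomial k) (AX k) (Polynomial.X ^ N))) R :=
      Submodule.span_le.mpr hsub
    rw [hSspan] at hle
    intro m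
    exact hle (by trivial)
  set u : AX k := IsLocalization.Away.invSelf (Polynomial.X : Polynomial k) with hu
  have huX : algebraMap (Polynomial k) (AX k) Polynomial.X * u = 1 :=
    IsLocalization.Away.mul_invSelf (S := AX k) (x := (Polynomial.X : Polynomial k))
  have hkey : algebraMap (Polynomial k) (AX k) (Polynomial.X ^ N) * u ^ (N + 1) = u := by
    rw [map_pow, pow_succ, ← mul_assoc, ← mul_pow, huX, one_pow, one_mul]
  obtain ⟨q, hq⟩ := hall (u ^ (N + 1))
  rw [hkey] at hq
  have hXq : algebraMap (Polynomial k) (AX k) (Polynomial.X * q) = 1 := by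
    rw [map_mul, show algebraMap (Polynomial k) (AX k) q = u from hq, huX]
  have hinj : Function.Injective (algebraMap (Polynomial k) (AX k)) :=
    IsLocalization.injective _
      (powers_le_nonZeroDivisors_of_noZeroDivisors (Polynomial.X_ne_zero))
  have hone : (Polynomial.X : Polynomial k) * q = 1 := hinj (by rw [hXq, map_one])
  exact Polynomial.not_isUnit_X (IsUnit.of_mul_eq_one q hone)

end St18

/-!
Statement 18: Let `B = k[x]`, `A = k[x,x⁻¹]` and `A' = k[x,x⁻¹,y]/(y²)` (the trivial
square-zero extension of `A` by `A`), with the localization map `B → A` and the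
square-zero surjection `A' → A`.  Then the fiber product `B' = B ×_A A'` is isomorphic
to `k[x, y, yx⁻¹, yx⁻², …]/(y, yx⁻¹, …)²` — that is, to the trivial square-zero
extension `B ⊕ A` of `B = k[x]` by the `B`-module `A = k[x,x⁻¹]` — and `B'` is not a
finitely generated `k`-algebra.
-/

theorem statement_18 (k : Type) [Field k] :
    let B := Polynomial k
    let A := Localization.Away (Polynomial.X : Polynomial k)
    let A' := TrivSqZeroExt A A
    let g : B →ₐ[k] A := IsScalarTower.toAlgHom k B A
    let f : A' →ₐ[k] A := TrivSqZeroExt.fstHom k A A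
    let B' : Subalgebra k (B × A') :=
      AlgHom.equalizer (g.comp (AlgHom.fst k B A')) (f.comp (AlgHom.snd k B A'))
    Nonempty (B' ≃ₐ[k] TrivSqZeroExt B A) ∧ ¬ Algebra.FiniteType k B' := by
  intro B A A' g f B'
  have hmem : ∀ t : TrivSqZeroExt B A, St18.toB' k t ∈ B' := by
    intro t
    show g (St18.toB' k t).1 = f (St18.toB' k t).2
    rfl
  have hbij : Function.Bijective ((St18.toB' k).codRestrict B' hmem) := by
    constructor
    · intro t t' h
      have h' : St18.toB' k t = St18.toB' k t' := congrArg Subtype.val h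
      have h1 := congrArg Prod.fst h'
      have h2 := congrArg (fun p => (Prod.snd p).snd) h'
      exact TrivSqZeroExt.ext h1 h2
    · rintro ⟨⟨b, a'⟩, hba⟩
      have hba' : g b = a'.fst := hba
      refine ⟨(b, a'.snd), ?_⟩
      apply Subtype.ext
      show (b, ((algebraMap B A b : A), a'.snd)) = (b, a')
      have : ((algebraMap B A b : A), a'.snd) = a' := by
        ext
        · exact hba'
        · rfl
      rw [this]
      rfl
  have e : TrivSqZeroExt B A ≃ₐ[k] B' := AlgEquiv.ofBijective _ hbij
  refine ⟨⟨e.symm⟩, ?_⟩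
  intro hft
  exact St18.not_finiteType k (by haveI := hft; exact (Algebra.FiniteType.of_surjective e.symm.toAlgHom
    e.symm.surjective))
end
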